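/- arXiv:2605.22713 — 5 statements merged into one kernel-verified Lean document; each statement's English description precedes it below -/
import Mathlib

section
/- Let M ⊆ B(H) be a von Neumann algebra and let (R, T, ψ) be a bipartite exact embezzlement protocol for α in (M, M', H). Suppose moreover that the block operator of R on ℓ²(Fin d; H) is unitary. Then for every d × d matrix (X i j)_{i,j ∈ Fin d} of elements of M, ∑_{k,ℓ ∈ Fin d} ⟨(R k 0)* (X k ℓ) (R ℓ 0) ψ, ψ⟩ = ∑_{k ∈ Fin d} (α k)^2 · ⟨(X k k) ψ, ψ⟩. (This expresses the unitary equivalence R(⟨·e₀,e₀⟩ ⊗ ω)R* = Tr(ρ(φ)·) ⊗ ω, where ω = ⟨· ψ, ψ⟩ and ρ(φ) = ∑ i, (α i)^2 E_{ii}.) -/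
open scoped InnerProductSpace
open ContinuousLinearMap

/-- The block operator on `ℓ²(Fin d; H)` associated with a `d × d` matrix of operators on `H`,
acting by `(R x) i = ∑ j, (R i j) (x j)`. -/
noncomputable def blockOp {H : Type*} [NormedAddCommGroup H] [InnerProductSpace ℂ H] {d : ℕ}
    (R : Fin d → Fin d → H →L[ℂ] H) :
    (PiLp 2 fun _ : Fin d => H) →L[ℂ] (PiLp 2 fun _ : Fin d => H) :=
  (((PiLp.continuousLinearEquiv 2 ℂ (fun _ : Fin d => H)).symm :
      (∀ _ : Fin d, H) →L[ℂ] (PiLp 2 fun _ : Fin d => H))) ∘L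
    (ContinuousLinearMap.pi fun i => ∑ j, (R i j) ∘L (ContinuousLinearMap.proj j)) ∘L
    (((PiLp.continuousLinearEquiv 2 ℂ (fun _ : Fin d => H)) :
      (PiLp 2 fun _ : Fin d => H) →L[ℂ] (∀ _ : Fin d, H)))

variable {H : Type*} [NormedAddCommGroup H] [InnerProductSpace ℂ H] [CompleteSpace H]

/-- `R` is a contraction in `M_d ⊗ M`: all blocks lie in `M` and the block operator on
`ℓ²(Fin d; H)` has operator norm at most `1`. -/
def IsContractionIn (M : VonNeumannAlgebra H) {d : ℕ}
    (R : Fin d → Fin d → H →L[ℂ] H) : Prop :=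
  (∀ i j, R i j ∈ M) ∧ ‖blockOp R‖ ≤ 1

/-- A bipartite exact embezzlement protocol for `α` in `(M, M', H)`: `R` is a contraction in
`M_d ⊗ M`, `T` is a contraction with blocks in the commutant `M'`, `ψ` is a unit vector, and
`(R i 0)(T j 0) ψ = δ_{ij} α i • ψ` for all `i, j`. -/
def BipartiteProtocol (M : VonNeumannAlgebra H) {d : ℕ} [NeZero d] (α : Fin d → ℝ)
    (R T : Fin d → Fin d → H →L[ℂ] H) (ψ : H) : Prop :=
  IsContractionIn M R ∧ IsContractionIn M.commutant T ∧ ‖ψ‖ = 1 ∧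
    ∀ i j, (R i 0) ((T j 0) ψ) = (if i = j then (α i : ℂ) else 0) • ψ

/-- A monopartite exact embezzlement protocol for `α` in `(M, H)`: `R` is a contraction in
`M_d ⊗ M`, `ψ` is a unit vector, and `⟨(R i 0)* X (R j 0) ψ, ψ⟩ = δ_{ij} (α i)² ⟨X ψ, ψ⟩`
for all `X ∈ M` and all `i, j`. -/
def MonopartiteProtocol (M : VonNeumannAlgebra H) {d : ℕ} [NeZero d] (α : Fin d → ℝ)
    (R : Fin d → Fin d → H →L[ℂ] H) (ψ : H) : Prop :=
  IsContractionIn M R ∧ ‖ψ‖ = 1 ∧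
    ∀ X ∈ M, ∀ i j : Fin d,
      ⟪(adjoint (R i 0)) (X ((R j 0) ψ)), ψ⟫_ℂ
        = (if i = j then ((α i : ℂ)) ^ 2 else 0) * ⟪X ψ, ψ⟫_ℂ

/-- The orthogonal projection of `H` onto the closure of `{Y ψ : Y ∈ S}`, as an operator
on `H`. -/
noncomputable def suppProjOn (S : Set (H →L[ℂ] H)) (ψ : H) : H →L[ℂ] H :=
  letI K := (Submodule.span ℂ ((fun Y : H →L[ℂ] H => Y ψ) '' S)).topologicalClosure
  K.subtypeL ∘L (K.orthogonalProjection : H →L[ℂ] K)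

/-- The support projection of the state `⟨· ψ, ψ⟩` on `M`: the orthogonal projection onto
the closure of `M' ψ`. -/
noncomputable def suppP (M : VonNeumannAlgebra H) (ψ : H) : H →L[ℂ] H :=
  suppProjOn (M.commutant : Set (H →L[ℂ] H)) ψ

/-- The support projection of the state `⟨· ψ, ψ⟩` on `M'`: the orthogonal projection onto
the closure of `M ψ`. -/
noncomputable def suppP' (M : VonNeumannAlgebra H) (ψ : H) : H →L[ℂ] H :=
  suppProjOn (M : Set (H →L[ℂ] H)) ψ

instance {H : Type*} [NormedAddCommGroup H] [InnerProductSpace ℂ H] [CompleteSpace H] {d : ℕ} :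
    CompleteSpace (PiLp 2 fun _ : Fin d => H) :=
  inferInstance

section Aux
variable {H : Type*} [NormedAddCommGroup H] [InnerProductSpace ℂ H] [CompleteSpace H] {d : ℕ}

lemma blockOp_apply (R : Fin d → Fin d → H →L[ℂ] H) (x : PiLp 2 fun _ : Fin d => H) (i : Fin d) :
    blockOp R x i = ∑ j, R i j (x j) := by
  simp [blockOp]

noncomputable def sngl (i : Fin d) (v : H) : PiLp 2 (fun _ : Fin d => H) :=
  WithLp.toLp 2 (fun j => if j = i then v else 0)

lemma sngl_apply (i : Fin d) (v : H) (j : Fin d) :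
    sngl i v j = if j = i then v else 0 := rfl

lemma inner_sngl (i : Fin d) (v w : H) : ⟪sngl i v, sngl i w⟫_ℂ = ⟪v, w⟫_ℂ := by
  rw [PiLp.inner_apply, Finset.sum_eq_single i]
  · simp [sngl]
  · intro b _ hb; simp [sngl, hb]
  · intro h; exact absurd (Finset.mem_univ i) h

lemma norm_sq_sngl (i : Fin d) (v : H) : ‖sngl i v‖ ^ 2 = ‖v‖ ^ 2 := by
  rw [PiLp.norm_sq_eq_of_L2, Finset.sum_eq_single i]
  · simp [sngl]
  · intro b _ hb; simp [sngl, hb]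
  · intro h; exact absurd (Finset.mem_univ i) h

lemma blockOp_sngl (R : Fin d → Fin d → H →L[ℂ] H) (i : Fin d) (v : H) (k : Fin d) :
    blockOp R (sngl i v) k = R k i v := by
  rw [blockOp_apply, Finset.sum_eq_single i]
  · simp [sngl]
  · intro b _ hb; simp [sngl, hb]
  · intro h; exact absurd (Finset.mem_univ i) h

lemma adjoint_blockOp (R : Fin d → Fin d → H →L[ℂ] H) :
    adjoint (blockOp R) = blockOp (fun i j => adjoint (R j i)) := by
  symm
  rw [ContinuousLinearMap.eq_adjoint_iff]
  intro x y
  simp only [PiLp.inner_apply, blockOp_apply, sum_inner, inner_sum, adjoint_inner_left]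
  exact Finset.sum_comm

lemma adjoint_apply_self_eq {E : Type*} [NormedAddCommGroup E] [InnerProductSpace ℂ E]
    [CompleteSpace E] (B : E →L[ℂ] E) (hB : ‖B‖ ≤ 1) (v : E) (hv : ‖B v‖ = ‖v‖) :
    adjoint B (B v) = v := by
  have hre : RCLike.re ⟪adjoint B (B v), v⟫_ℂ = ‖v‖ ^ 2 := by
    rw [adjoint_inner_left, ← hv]
    exact inner_self_eq_norm_sq (𝕜 := ℂ) (B v)
  have hnB : ‖adjoint B (B v)‖ ≤ ‖v‖ := by
    calc ‖adjoint B (B v)‖ ≤ ‖adjoint B‖ * ‖B v‖ := le_opNorm _ _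
      _ ≤ 1 * ‖v‖ := by
          rw [hv]
          exact mul_le_mul_of_nonneg_right (by rwa [LinearIsometryEquiv.norm_map adjoint B])
            (norm_nonneg v)
      _ = ‖v‖ := one_mul _
  have hsq : ‖adjoint B (B v) - v‖ ^ 2 ≤ 0 := by
    have expand := @norm_sub_sq ℂ _ _ _ _ (adjoint B (B v)) v
    rw [expand, hre]
    nlinarith [norm_nonneg v, norm_nonneg (adjoint B (B v))]
  have : ‖adjoint B (B v) - v‖ = 0 := by nlinarith [norm_nonneg (adjoint B (B v) - v)]
  rwa [norm_eq_zero, sub_eq_zero] at this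
end Aux

/-- If `(R, T, ψ)` is a bipartite exact embezzlement protocol for `α` and the block operator
of `R` is unitary, then `R (⟨· e₀, e₀⟩ ⊗ ω) R* = Tr(ρ(φ)·) ⊗ ω`, i.e. for every matrix
`(X i j)` of elements of `M`,
`∑ k ℓ, ⟨(R k 0)* (X k ℓ) (R ℓ 0) ψ, ψ⟩ = ∑ k, (α k)² ⟨(X k k) ψ, ψ⟩`. -/
theorem unitary_equivalence_of_states
    {H : Type*} [NormedAddCommGroup H] [InnerProductSpace ℂ H] [CompleteSpace H]
    (M : VonNeumannAlgebra H) {d : ℕ} [NeZero d] (hd : 2 ≤ d)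
    (α : Fin d → ℝ) (hα : ∀ i, 0 < α i) (hsum : ∑ i, (α i) ^ 2 = 1)
    (R T : Fin d → Fin d → H →L[ℂ] H) (ψ : H)
    (hproto : BipartiteProtocol M α R T ψ)
    (hU : blockOp R ∈ unitary ((PiLp 2 fun _ : Fin d => H) →L[ℂ] (PiLp 2 fun _ : Fin d => H)))
    (X : Fin d → Fin d → H →L[ℂ] H) (hX : ∀ i j, X i j ∈ M) :
    ∑ k, ∑ l, ⟪(adjoint (R k 0)) ((X k l) ((R l 0) ψ)), ψ⟫_ℂ
      = ∑ k, ((α k : ℂ)) ^ 2 * ⟪(X k k) ψ, ψ⟫_ℂ := by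
  obtain ⟨⟨hRM, hRn⟩, ⟨hTM, hTn⟩, hψ, hrel⟩ := hproto
  set U := blockOp R with hUdef
  -- U* U = 1 pointwise
  have hUadj : ∀ a : PiLp 2 fun _ : Fin d => H, adjoint U (U a) = a := by
    intro a
    have h1 : star U * U = 1 := (Unitary.mem_iff.mp hU).1
    calc adjoint U (U a) = star U (U a) := by rw [star_eq_adjoint]
      _ = (star U * U) a := (ContinuousLinearMap.mul_apply _ _ _).symm
      _ = a := by rw [h1, ContinuousLinearMap.one_apply]
  have hUinner : ∀ a b : PiLp 2 fun _ : Fin d => H, ⟪U a, U b⟫_ℂ = ⟪a, b⟫_ℂ := by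
    intro a b
    calc ⟪U a, U b⟫_ℂ = ⟪adjoint U (U a), b⟫_ℂ := (adjoint_inner_left U b (U a)).symm
      _ = ⟪a, b⟫_ℂ := by rw [hUadj]
  -- column-0 of R is an isometry
  have hcolA : ∀ x : H, ∑ i, adjoint (R i 0) (R i 0 x) = x := by
    intro x
    apply ext_inner_right ℂ
    intro y
    rw [sum_inner]
    simp only [adjoint_inner_left]
    have h := hUinner (sngl (0 : Fin d) x) (sngl (0 : Fin d) y)
    rw [inner_sngl, PiLp.inner_apply] at h
    simp only [hUdef, blockOp_sngl] at h
    exact h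
  -- commutation
  have hcomm : ∀ Z : H →L[ℂ] H, Z ∈ M.commutant → ∀ Y : H →L[ℂ] H, Y ∈ M → ∀ x : H,
      Y (Z x) = Z (Y x) := by
    intro Z hZ Y hY x
    have h := VonNeumannAlgebra.mem_commutant_iff.mp hZ Y hY
    have h2 := congrArg (fun f : H →L[ℂ] H => f x) h
    simpa [mul_apply] using h2
  have hTR : ∀ i j, T j 0 (R i 0 ψ) = (if i = j then (α i : ℂ) else 0) • ψ := by
    intro i j
    rw [← hcomm (T j 0) (hTM j 0) (R i 0) (hRM i 0) ψ]
    exact hrel i j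
  -- norms
  have hsumnorm : ∑ i, ‖R i 0 ψ‖ ^ 2 = 1 := by
    have h := hUinner (sngl (0 : Fin d) ψ) (sngl (0 : Fin d) ψ)
    rw [inner_sngl, PiLp.inner_apply] at h
    simp only [hUdef, blockOp_sngl] at h
    simp only [inner_self_eq_norm_sq_to_K] at h
    rw [hψ] at h
    have h2 : ∑ i, ‖R i 0 ψ‖ ^ 2 = (1 : ℝ) ^ 2 := by exact_mod_cast h
    simpa using h2
  have hTcol : ∀ x : H, ∑ j, ‖T j 0 x‖ ^ 2 ≤ ‖x‖ ^ 2 := by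
    intro x
    have h1 : ∑ j, ‖T j 0 x‖ ^ 2 = ‖blockOp T (sngl (0 : Fin d) x)‖ ^ 2 := by
      rw [PiLp.norm_sq_eq_of_L2]
      exact Finset.sum_congr rfl fun j _ => by rw [blockOp_sngl]
    rw [h1]
    have h2 : ‖blockOp T (sngl (0 : Fin d) x)‖ ≤ ‖sngl (0 : Fin d) x‖ := by
      calc ‖blockOp T (sngl (0 : Fin d) x)‖ ≤ ‖blockOp T‖ * ‖sngl (0 : Fin d) x‖ := le_opNorm _ _
        _ ≤ 1 * ‖sngl (0 : Fin d) x‖ := mul_le_mul_of_nonneg_right hTn (norm_nonneg _)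
        _ = ‖sngl (0 : Fin d) x‖ := one_mul _
    calc ‖blockOp T (sngl (0 : Fin d) x)‖ ^ 2 ≤ ‖sngl (0 : Fin d) x‖ ^ 2 :=
          pow_le_pow_left₀ (norm_nonneg _) h2 2
      _ = ‖x‖ ^ 2 := norm_sq_sngl (0 : Fin d) x
  have hTRnorm : ∀ i, ∑ j, ‖T j 0 (R i 0 ψ)‖ ^ 2 = (α i) ^ 2 := by
    intro i
    calc ∑ j, ‖T j 0 (R i 0 ψ)‖ ^ 2
        = ∑ j, ‖(if i = j then (α i : ℂ) else 0) • ψ‖ ^ 2 :=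
          Finset.sum_congr rfl fun j _ => by rw [hTR i j]
      _ = (α i) ^ 2 := by
          rw [Finset.sum_eq_single i]
          · rw [if_pos rfl, norm_smul, hψ, mul_one, Complex.norm_real, Real.norm_eq_abs, sq_abs]
          · intro b _ hb
            rw [if_neg fun h => hb h.symm, zero_smul, norm_zero]
            norm_num
          · intro h; exact absurd (Finset.mem_univ i) h
  have hnormR : ∀ i, ‖R i 0 ψ‖ ^ 2 = (α i) ^ 2 := by
    have hle : ∀ i ∈ Finset.univ, (α i) ^ 2 ≤ ‖R i 0 ψ‖ ^ 2 := fun i _ => by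
      rw [← hTRnorm i]; exact hTcol (R i 0 ψ)
    have hsums : ∑ i, (α i) ^ 2 = ∑ i, ‖R i 0 ψ‖ ^ 2 := by rw [hsum, hsumnorm]
    intro i
    exact ((Finset.sum_eq_sum_iff_of_le hle).mp hsums i (Finset.mem_univ i)).symm
  -- R i 0 ψ = α i • T i 0 * ψ
  have hRT : ∀ i, R i 0 ψ = (α i : ℂ) • adjoint (T i 0) ψ := by
    intro i
    have hnv : ‖blockOp T (sngl (0 : Fin d) (R i 0 ψ))‖ = ‖sngl (0 : Fin d) (R i 0 ψ)‖ := by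
      have h1 : ‖blockOp T (sngl (0 : Fin d) (R i 0 ψ))‖ ^ 2 = ‖sngl (0 : Fin d) (R i 0 ψ)‖ ^ 2 := by
        rw [PiLp.norm_sq_eq_of_L2, norm_sq_sngl]
        calc ∑ j, ‖blockOp T (sngl (0 : Fin d) (R i 0 ψ)) j‖ ^ 2
            = ∑ j, ‖T j 0 (R i 0 ψ)‖ ^ 2 :=
              Finset.sum_congr rfl fun j _ => by rw [blockOp_sngl]
          _ = (α i) ^ 2 := hTRnorm i
          _ = ‖R i 0 ψ‖ ^ 2 := (hnormR i).symm
      have h2 : ‖blockOp T (sngl (0 : Fin d) (R i 0 ψ))‖ = Real.sqrt (‖sngl (0 : Fin d) (R i 0 ψ)‖ ^ 2) := by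
        rw [← h1, Real.sqrt_sq (norm_nonneg _)]
      rw [h2, Real.sqrt_sq (norm_nonneg _)]
    have key := adjoint_apply_self_eq (blockOp T) hTn (sngl (0 : Fin d) (R i 0 ψ)) hnv
    have hBv : blockOp T (sngl (0 : Fin d) (R i 0 ψ))
        = (WithLp.toLp 2 (fun j => (if i = j then (α i : ℂ) else 0) • ψ) : PiLp 2 fun _ : Fin d => H) :=
      PiLp.ext fun j => by show _ = (if i = j then (α i : ℂ) else 0) • ψ; rw [blockOp_sngl, hTR]
    rw [hBv] at key
    have key0 := congrArg (fun z : PiLp 2 fun _ : Fin d => H => z 0) key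
    simp only [adjoint_blockOp, blockOp_apply, PiLp.toLp_apply] at key0
    have hrhs : sngl (0 : Fin d) (R i 0 ψ) 0 = R i 0 ψ := by simp [sngl]
    rw [hrhs] at key0
    have hlhs : ∑ j, adjoint (T j 0) ((if i = j then (α i : ℂ) else 0) • ψ)
        = (α i : ℂ) • adjoint (T i 0) ψ := by
      rw [Finset.sum_eq_single i]
      · rw [if_pos rfl, map_smul]
      · intro b _ hb
        rw [if_neg fun h => hb h.symm, zero_smul, map_zero]
      · intro h; exact absurd (Finset.mem_univ i) h
    rw [hlhs] at key0
    exact key0.symm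
  have hα0 : ∀ i, (α i : ℂ) ≠ 0 := fun i => by exact_mod_cast (hα i).ne'
  have hTadj : ∀ i, adjoint (T i 0) ψ = (α i : ℂ)⁻¹ • R i 0 ψ := fun i => by
    rw [hRT i, smul_smul, inv_mul_cancel₀ (hα0 i), one_smul]
  -- per-term computation
  have hterm : ∀ k l, ⟪adjoint (R k 0) (X k l (R l 0 ψ)), ψ⟫_ℂ
      = if k = l then ((α k : ℂ)) ^ 2 * ⟪X k k ψ, ψ⟫_ℂ else 0 := by
    intro k l
    have hstar : adjoint (T l 0) ∈ M.commutant := by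
      rw [← star_eq_adjoint]; exact star_mem (hTM l 0)
    have hcommX : X k l (adjoint (T l 0) ψ) = adjoint (T l 0) (X k l ψ) :=
      hcomm (adjoint (T l 0)) hstar (X k l) (hX k l) ψ
    rw [adjoint_inner_left]
    rw [hRT l, hRT k, map_smul, inner_smul_left, inner_smul_right, hcommX,
      adjoint_inner_left, hTadj k, map_smul, hTR k l, smul_smul, inner_smul_right]
    by_cases hkl : k = l
    · subst hkl
      rw [if_pos rfl, inv_mul_cancel₀ (hα0 k), one_mul, Complex.conj_ofReal]
      rw [if_pos rfl]
      ring
    · simp [hkl]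
  calc ∑ k, ∑ l, ⟪adjoint (R k 0) (X k l (R l 0 ψ)), ψ⟫_ℂ
      = ∑ k, ∑ l, (if k = l then ((α k : ℂ)) ^ 2 * ⟪X k k ψ, ψ⟫_ℂ else 0) :=
        Finset.sum_congr rfl fun k _ => Finset.sum_congr rfl fun l _ => hterm k l
    _ = ∑ k, ((α k : ℂ)) ^ 2 * ⟪X k k ψ, ψ⟫_ℂ := by
        exact Finset.sum_congr rfl fun k _ => by rw [Finset.sum_ite_eq]; simp
end

section
/- Let M ⊆ B(H) be a von Neumann algebra and let (R, T, ψ) be a bipartite exact embezzlement protocol for α in (M, M', H). Then for all i, j ∈ Fin d, all X ∈ M and all Y ∈ M': ⟨(R i 0)* X (R j 0) ψ, ψ⟩ = (if i = j then (α i)^2 else 0) · ⟨X ψ, ψ⟩ and ⟨(T i 0)* Y (T j 0) ψ, ψ⟩ = (if i = j then (α i)^2 else 0) · ⟨Y ψ, ψ⟩. -/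
open scoped InnerProductSpace
open ContinuousLinearMap

variable {H : Type*} [NormedAddCommGroup H] [InnerProductSpace ℂ H] [CompleteSpace H]

omit [CompleteSpace H] in
lemma colSum_le [NeZero d] (R : Fin d → Fin d → H →L[ℂ] H) (h : ‖blockOp R‖ ≤ 1) (x : H) :
    ∑ i, ‖R i 0 x‖^2 ≤ ‖x‖^2 := by
  classical
  set v : PiLp 2 (fun _ : Fin d => H) := (WithLp.equiv 2 _).symm (Pi.single 0 x) with hv
  have hvj : ∀ j, v j = if j = 0 then x else 0 := by
    intro j; simp [hv, Pi.single_apply]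
  have hBv : ∀ i, blockOp R v i = R i 0 x := by
    intro i
    have : blockOp R v i = ∑ j, R i j (v j) := by
      simp [blockOp, ContinuousLinearMap.sum_apply]
    rw [this, Finset.sum_eq_single 0 (fun b _ hb => by simp [hvj, hb]) (by simp)]
    simp [hvj]
  have h1 : ‖blockOp R v‖ ≤ ‖v‖ := by
    calc ‖blockOp R v‖ ≤ ‖blockOp R‖ * ‖v‖ := (blockOp R).le_opNorm v
    _ ≤ 1 * ‖v‖ := by gcongr
    _ = ‖v‖ := one_mul _
  have h2 : ‖blockOp R v‖^2 = ∑ i, ‖R i 0 x‖^2 := by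
    rw [PiLp.norm_sq_eq_of_L2]; exact Finset.sum_congr rfl fun i _ => by rw [hBv]
  have h3 : ‖v‖^2 = ‖x‖^2 := by
    rw [PiLp.norm_sq_eq_of_L2]
    rw [Finset.sum_eq_single 0 (fun b _ hb => by simp [hvj, hb]) (by simp)]
    simp [hvj]
  calc ∑ i, ‖R i 0 x‖^2 = ‖blockOp R v‖^2 := h2.symm
  _ ≤ ‖v‖^2 := by gcongr
  _ = ‖x‖^2 := h3

omit [CompleteSpace H] in
lemma pos_apply_eq_zero (A : H →L[ℂ] H)
    (hsa : ∀ x y : H, ⟪A x, y⟫_ℂ = ⟪x, A y⟫_ℂ)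
    (hpos : ∀ y : H, 0 ≤ (⟪A y, y⟫_ℂ).re)
    {x : H} (hx : (⟪A x, x⟫_ℂ).re = 0) : A x = 0 := by
  set u := A x with hu
  set c := (⟪A u, u⟫_ℂ).re with hc
  have hc0 : 0 ≤ c := hpos u
  have hAux : ⟪A u, x⟫_ℂ = (‖u‖ : ℂ)^2 := by
    rw [hsa, ← hu, inner_self_eq_norm_sq_to_K]; norm_num
  have hAxu : ⟪A x, u⟫_ℂ = (‖u‖ : ℂ)^2 := by
    rw [← inner_conj_symm, ← hsa u x, hAux]
    simp
  have key : ∀ t : ℝ, 0 ≤ 2 * t * ‖u‖^2 + t^2 * c := by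
    intro t
    have h0 := hpos (x + (t : ℂ) • u)
    have hexp : ⟪A (x + (t:ℂ) • u), x + (t:ℂ) • u⟫_ℂ
        = ⟪A x, x⟫_ℂ + (t:ℂ) * ⟪A x, u⟫_ℂ + (t:ℂ) * ⟪A u, x⟫_ℂ
          + (t:ℂ)^2 * ⟪A u, u⟫_ℂ := by
      simp only [map_add, map_smul, inner_add_left, inner_add_right,
        inner_smul_left, inner_smul_right, Complex.conj_ofReal]
      ring
    rw [hexp, hAux, hAxu] at h0
    simp only [Complex.add_re, Complex.mul_re, Complex.ofReal_re, Complex.ofReal_im,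
      hx, Complex.ofReal_pow, ← Complex.ofReal_pow] at h0
    nlinarith [h0]
  by_contra hne
  have hn : 0 < ‖u‖^2 := pow_pos (norm_pos_iff.mpr hne) 2
  have hcpos : (0:ℝ) < c + 1 := by linarith
  set ε := ‖u‖^2 / (c + 1) with hε
  have hεpos : 0 < ε := div_pos hn hcpos
  have hεc : ε * (c + 1) = ‖u‖^2 := div_mul_cancel₀ _ (ne_of_gt hcpos)
  have := key (-ε)
  nlinarith [this, hn, hc0, hεpos, hεc, mul_pos hεpos hεpos]

/-- For a family `T` with column sums `∑ k, ‖T k x‖² ≤ ‖x‖²` and equality at `x`,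
we get `∑ k, (T k)* (T k) x = x`. -/
lemma col_eq_of_norm_eq (T : Fin d → (H →L[ℂ] H))
    (hcol : ∀ y : H, ∑ k, ‖T k y‖^2 ≤ ‖y‖^2) {x : H}
    (hx : ∑ k, ‖T k x‖^2 = ‖x‖^2) :
    ∑ k, adjoint (T k) (T k x) = x := by
  set A : H →L[ℂ] H := ContinuousLinearMap.id ℂ H - ∑ k, (adjoint (T k)) ∘L (T k) with hA
  have hAap : ∀ y : H, A y = y - ∑ k, adjoint (T k) (T k y) := by
    intro y; simp [hA, ContinuousLinearMap.sum_apply]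
  have hinner : ∀ y z : H, ⟪A y, z⟫_ℂ = ⟪y, z⟫_ℂ - ∑ k, ⟪T k y, T k z⟫_ℂ := by
    intro y z
    rw [hAap, inner_sub_left, sum_inner]
    congr 1
    exact Finset.sum_congr rfl fun k _ => adjoint_inner_left _ _ _
  have hsa : ∀ y z : H, ⟪A y, z⟫_ℂ = ⟪y, A z⟫_ℂ := by
    intro y z
    rw [hinner, hAap, inner_sub_right, inner_sum]
    congr 1
    exact Finset.sum_congr rfl fun k _ => (adjoint_inner_right _ _ _).symm
  have hre : ∀ y : H, (⟪A y, y⟫_ℂ).re = ‖y‖^2 - ∑ k, ‖T k y‖^2 := by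
    intro y
    rw [hinner]
    simp only [Complex.sub_re, Complex.re_sum]
    congr 1
    · rw [inner_self_eq_norm_sq_to_K]; simp [← Complex.ofReal_pow]
    · exact Finset.sum_congr rfl fun k _ => by
        rw [inner_self_eq_norm_sq_to_K]; simp [← Complex.ofReal_pow]
  have hAx : A x = 0 := by
    apply pos_apply_eq_zero A hsa
    · intro y; rw [hre]; linarith [hcol y]
    · rw [hre, hx]; ring
  have := hAap x
  rw [hAx] at this
  exact (sub_eq_zero.mp this.symm).symm

/-- If `(R, T, ψ)` is a bipartite exact embezzlement protocol for `α`, then the marginal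
states are quasi-free: `⟨(R i 0)* X (R j 0) ψ, ψ⟩ = δ_{ij} (α i)² ⟨X ψ, ψ⟩` for `X ∈ M` and
`⟨(T i 0)* Y (T j 0) ψ, ψ⟩ = δ_{ij} (α i)² ⟨Y ψ, ψ⟩` for `Y ∈ M'`. -/
theorem bipartite_quasifree
    {H : Type*} [NormedAddCommGroup H] [InnerProductSpace ℂ H] [CompleteSpace H]
    (M : VonNeumannAlgebra H) {d : ℕ} [NeZero d] (hd : 2 ≤ d)
    (α : Fin d → ℝ) (hα : ∀ i, 0 < α i) (hsum : ∑ i, (α i) ^ 2 = 1)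
    (R T : Fin d → Fin d → H →L[ℂ] H) (ψ : H)
    (hproto : BipartiteProtocol M α R T ψ) :
    ∀ i j : Fin d,
      (∀ X ∈ M,
        ⟪(adjoint (R i 0)) (X ((R j 0) ψ)), ψ⟫_ℂ
          = (if i = j then ((α i : ℂ)) ^ 2 else 0) * ⟪X ψ, ψ⟫_ℂ) ∧
      (∀ Y ∈ M.commutant,
        ⟪(adjoint (T i 0)) (Y ((T j 0) ψ)), ψ⟫_ℂ
          = (if i = j then ((α i : ℂ)) ^ 2 else 0) * ⟪Y ψ, ψ⟫_ℂ) := by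
  classical
  obtain ⟨⟨hRmem, hRnorm⟩, ⟨hTmem, hTnorm⟩, hψ, hcv⟩ := hproto
  have hRcol := colSum_le R hRnorm
  have hTcol := colSum_le T hTnorm
  have hnormRT : ∀ k l : Fin d, ‖R k 0 (T l 0 ψ)‖^2 = if k = l then α k ^ 2 else 0 := by
    intro k l
    rw [hcv k l]
    split_ifs with h
    · rw [norm_smul, hψ, mul_one, Complex.norm_real, Real.norm_eq_abs,
        _root_.abs_of_pos (hα k)]
    · simp
  have hsumRT : ∀ l, ∑ k, ‖R k 0 (T l 0 ψ)‖^2 = α l ^ 2 := by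
    intro l
    rw [Finset.sum_congr rfl fun k _ => hnormRT k l]
    simp
  have hle1 : ∀ l, α l ^ 2 ≤ ‖T l 0 ψ‖^2 := fun l => (hsumRT l) ▸ hRcol (T l 0 ψ)
  have heq : ∀ l, ‖T l 0 ψ‖^2 = α l ^ 2 := by
    intro l
    by_contra hne
    have hlt : α l ^ 2 < ‖T l 0 ψ‖^2 := lt_of_le_of_ne (hle1 l) (Ne.symm hne)
    have h2 : ∑ l', α l' ^ 2 < ∑ l', ‖T l' 0 ψ‖^2 :=
      Finset.sum_lt_sum (fun k _ => hle1 k) ⟨l, Finset.mem_univ l, hlt⟩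
    have h3 := hTcol ψ
    rw [hψ, one_pow] at h3
    rw [hsum] at h2; linarith
  have hTsum1 : ∑ l, ‖T l 0 ψ‖^2 = 1 := by
    rw [Finset.sum_congr rfl fun l _ => heq l, hsum]
  have hCT : ∑ k, ContinuousLinearMap.adjoint (T k 0) (T k 0 ψ) = ψ :=
    col_eq_of_norm_eq (fun k => T k 0) hTcol (by rw [hTsum1, hψ, one_pow])
  have hCR : ∀ l, ∑ k, ContinuousLinearMap.adjoint (R k 0) (R k 0 (T l 0 ψ)) = T l 0 ψ :=
    fun l => col_eq_of_norm_eq (fun k => R k 0) hRcol (by rw [hsumRT l, heq l])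
  have hD : ∀ l, ContinuousLinearMap.adjoint (R l 0) (R l 0 (T l 0 ψ)) = T l 0 ψ := by
    intro l
    have h1 := hCR l
    rwa [Finset.sum_eq_single l
      (fun k _ hk => by rw [hcv k l, if_neg hk, zero_smul, map_zero]) (by simp)] at h1
  have hcomm1 : ∀ (X : H →L[ℂ] H), X ∈ M → ∀ (k : Fin d) (x : H),
      X (ContinuousLinearMap.adjoint (T k 0) x)
        = ContinuousLinearMap.adjoint (T k 0) (X x) := by
    intro X hX k x
    have h1 : star (T k 0) ∈ M.commutant := star_mem (hTmem k 0)
    have h2 := VonNeumannAlgebra.mem_commutant_iff.mp h1 X hX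
    have h3 := DFunLike.congr_fun h2 x
    simpa [ContinuousLinearMap.mul_apply, ContinuousLinearMap.star_eq_adjoint] using h3
  have hcomm2 : ∀ (Y : H →L[ℂ] H), Y ∈ M.commutant → ∀ (k : Fin d) (x : H),
      Y (ContinuousLinearMap.adjoint (R k 0) x)
        = ContinuousLinearMap.adjoint (R k 0) (Y x) := by
    intro Y hY k x
    have h1 : star (R k 0) ∈ M := star_mem (hRmem k 0)
    have h2 := VonNeumannAlgebra.mem_commutant_iff.mp hY (star (R k 0)) h1
    have h3 := DFunLike.congr_fun h2 x
    simpa [ContinuousLinearMap.mul_apply, ContinuousLinearMap.star_eq_adjoint] using h3.symm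
  have hcomm3 : ∀ (k l : Fin d) (x : H), T k 0 (R l 0 x) = R l 0 (T k 0 x) := by
    intro k l x
    have h2 := VonNeumannAlgebra.mem_commutant_iff.mp (hTmem k 0) (R l 0) (hRmem l 0)
    have h3 := DFunLike.congr_fun h2 x
    simpa [ContinuousLinearMap.mul_apply] using h3.symm
  have hE : ∀ l, R l 0 ψ = (α l : ℂ) • ContinuousLinearMap.adjoint (T l 0) ψ := by
    intro l
    have h1 : R l 0 ψ = ∑ k, ContinuousLinearMap.adjoint (T k 0) (R l 0 (T k 0 ψ)) := by
      conv_lhs => rw [← hCT]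
      rw [map_sum]
      exact Finset.sum_congr rfl fun k _ => hcomm1 (R l 0) (hRmem l 0) k (T k 0 ψ)
    rw [h1, Finset.sum_eq_single l
      (fun k _ hk => by
        rw [hcv l k, if_neg (fun h => hk h.symm), zero_smul, map_zero]) (by simp)]
    rw [hcv l l, if_pos rfl, map_smul]
  have hF : ∀ l, T l 0 ψ = (α l : ℂ) • ContinuousLinearMap.adjoint (R l 0) ψ := by
    intro l
    have h0 : (α l : ℂ) • ψ = R l 0 (T l 0 ψ) := by rw [hcv l l, if_pos rfl]
    have h1 : ContinuousLinearMap.adjoint (R l 0) ((α l : ℂ) • ψ) = T l 0 ψ := by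
      rw [h0, hD l]
    rw [map_smul] at h1
    exact h1.symm
  intro i j
  constructor
  · intro X hX
    rw [ContinuousLinearMap.adjoint_inner_left, hE j, map_smul, hcomm1 X hX j,
      inner_smul_left, ContinuousLinearMap.adjoint_inner_left, hcomm3 j i, hcv i j,
      inner_smul_right, Complex.conj_ofReal]
    rcases eq_or_ne i j with h | h
    · subst h; rw [if_pos rfl, if_pos rfl]; ring
    · rw [if_neg h, if_neg h]; ring
  · intro Y hY
    rw [ContinuousLinearMap.adjoint_inner_left, hF j, map_smul, hcomm2 Y hY j,
      inner_smul_left, ContinuousLinearMap.adjoint_inner_left, hcv j i,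
      inner_smul_right, Complex.conj_ofReal]
    rcases eq_or_ne i j with h | h
    · subst h; rw [if_pos rfl, if_pos rfl]; ring
    · rw [if_neg (Ne.symm h), if_neg h]; ring
end

section
/- Let M ⊆ B(H) be a von Neumann algebra and let (R, ψ) be a monopartite exact embezzlement protocol for α in (M, H). Then for every nonempty list μ = [μ₁, …, μ_m] over Fin d, ⟨(R μ₁ 0)(R μ₂ 0) ⋯ (R μ_m 0) ψ, ψ⟩ = 0. -/
open scoped InnerProductSpace
open ContinuousLinearMap

set_option maxHeartbeats 1000000
set_option synthInstance.maxHeartbeats 1000000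

variable {H : Type*} [NormedAddCommGroup H] [InnerProductSpace ℂ H] [CompleteSpace H]

instance piLpCompleteSpace_aux {H : Type*} [NormedAddCommGroup H] {d : ℕ} [CompleteSpace H] :
    CompleteSpace (PiLp 2 fun _ : Fin d => H) := by
  have : CompleteSpace (∀ _ : Fin d, H) := inferInstance
  exact inferInstance

noncomputable def emb0 {d : ℕ} [NeZero d] : H →L[ℂ] (PiLp 2 fun _ : Fin d => H) :=
  ((PiLp.continuousLinearEquiv 2 ℂ (fun _ : Fin d => H)).symm :
      (∀ _ : Fin d, H) →L[ℂ] (PiLp 2 fun _ : Fin d => H)) ∘L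
    (ContinuousLinearMap.pi fun i : Fin d =>
      if i = 0 then ContinuousLinearMap.id ℂ H else 0)

omit [CompleteSpace H] in
lemma emb0_apply {d : ℕ} [NeZero d] (x : H) :
    (emb0 (d := d) x : PiLp 2 fun _ : Fin d => H)
      = (WithLp.equiv 2 (∀ _ : Fin d, H)).symm (Pi.single 0 x) := by
  ext i
  simp only [emb0, ContinuousLinearMap.comp_apply, ContinuousLinearEquiv.coe_coe,
    PiLp.continuousLinearEquiv_symm_apply, WithLp.equiv_symm_apply, PiLp.toLp_apply,
    ContinuousLinearMap.pi_apply, Pi.single_apply]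
  by_cases h : i = 0 <;> simp [h]

omit [CompleteSpace H] in
lemma emb0_norm {d : ℕ} [NeZero d] (x : H) : ‖emb0 (d := d) x‖ = ‖x‖ := by
  rw [emb0_apply]
  exact PiLp.norm_toLp_single 2 (fun _ : Fin d => H) 0 x

omit [CompleteSpace H] in
lemma blockOp_emb0 {d : ℕ} [NeZero d] (R : Fin d → Fin d → H →L[ℂ] H) (x : H) (i : Fin d) :
    (blockOp R (emb0 x)) i = R i 0 x := by
  rw [emb0_apply]
  simp only [blockOp, ContinuousLinearMap.comp_apply, ContinuousLinearEquiv.coe_coe,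
    PiLp.continuousLinearEquiv_apply, PiLp.continuousLinearEquiv_symm_apply,
    Equiv.apply_symm_apply, WithLp.equiv_symm_apply, PiLp.toLp_apply,
    ContinuousLinearMap.pi_apply, ContinuousLinearMap.sum_apply,
    ContinuousLinearMap.comp_apply, ContinuousLinearMap.proj_apply]
  rw [Finset.sum_eq_single 0]
  · simp
  · intro j _ hj; rw [Pi.single_eq_of_ne hj, map_zero]
  · simp

lemma cast_prod_sq {d : ℕ} (α : Fin d → ℝ) (μ : List (Fin d)) :
    (μ.map fun i => ((α i : ℂ)) ^ 2).prod = (((μ.map fun i => (α i) ^ 2).prod : ℝ) : ℂ) := by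
  induction μ with
  | nil => simp
  | cons a t ih => simp only [List.map_cons, List.prod_cons, ih]; push_cast; ring

lemma list_prod_lt_one {l : List ℝ} (h : ∀ x ∈ l, 0 < x ∧ x < 1) (hne : l ≠ []) :
    l.prod < 1 := by
  have key : ∀ l : List ℝ, (∀ x ∈ l, 0 < x ∧ x < 1) → 0 < l.prod ∧ l.prod ≤ 1 := by
    intro l
    induction l with
    | nil => simp
    | cons a t ih =>
        intro h
        obtain ⟨ha0, ha1⟩ := h a (by simp)
        obtain ⟨ht0, ht1⟩ := ih (fun x hx => h x (by simp [hx]))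
        rw [List.prod_cons]
        constructor
        · positivity
        · nlinarith
  cases l with
  | nil => exact absurd rfl hne
  | cons a t =>
      obtain ⟨ha0, ha1⟩ := h a (by simp)
      obtain ⟨ht0, ht1⟩ := key t (fun x hx => h x (by simp [hx]))
      rw [List.prod_cons]
      nlinarith

/-- If `(R, ψ)` is a monopartite exact embezzlement protocol for `α`, then for every nonempty
word `μ = [μ₁, …, μ_m]` over `Fin d`, `⟨(R μ₁ 0) ⋯ (R μ_m 0) ψ, ψ⟩ = 0`. -/
theorem state_vanishes_on_words
    {H : Type*} [NormedAddCommGroup H] [InnerProductSpace ℂ H] [CompleteSpace H]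
    (M : VonNeumannAlgebra H) {d : ℕ} [NeZero d] (hd : 2 ≤ d)
    (α : Fin d → ℝ) (hα : ∀ i, 0 < α i) (hsum : ∑ i, (α i) ^ 2 = 1)
    (R : Fin d → Fin d → H →L[ℂ] H) (ψ : H)
    (hproto : MonopartiteProtocol M α R ψ) :
    ∀ μ : List (Fin d), μ ≠ [] →
      ⟪((μ.map (fun i => R i 0)).prod) ψ, ψ⟫_ℂ = 0 := by
  classical
  obtain ⟨⟨hmem, hnormR⟩, hψ, hkey⟩ := hproto
  -- the column operator
  set C : H →L[ℂ] (PiLp 2 fun _ : Fin d => H) := blockOp R ∘L emb0 with hCdef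
  have hCapp : ∀ (x : H) (i : Fin d), (C x) i = R i 0 x := fun x i => blockOp_emb0 R x i
  have hCnorm : ‖C‖ ≤ 1 := by
    refine opNorm_le_bound _ zero_le_one fun x => ?_
    calc ‖C x‖ = ‖blockOp R (emb0 x)‖ := rfl
      _ ≤ ‖blockOp R‖ * ‖emb0 x‖ := le_opNorm _ _
      _ ≤ 1 * ‖x‖ := by rw [emb0_norm]; exact mul_le_mul_of_nonneg_right hnormR (norm_nonneg x)
  have hψψ : ⟪ψ, ψ⟫_ℂ = 1 := by
    rw [inner_self_eq_norm_sq_to_K, hψ]; norm_num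
  -- norm-squared of each column entry on ψ
  have hRψ : ∀ i : Fin d, ⟪R i 0 ψ, R i 0 ψ⟫_ℂ = ((α i : ℂ)) ^ 2 := by
    intro i
    have h := hkey 1 M.one_mem i i
    simp only [ContinuousLinearMap.one_apply, if_pos rfl, if_true, hψψ, mul_one] at h
    rw [adjoint_inner_left] at h
    exact h
  have hCψ : ⟪C ψ, C ψ⟫_ℂ = 1 := by
    rw [PiLp.inner_apply]
    simp only [hCapp, hRψ]
    have : ∑ i, ((α i : ℂ)) ^ 2 = ((∑ i, (α i) ^ 2 : ℝ) : ℂ) := by push_cast; ring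
    rw [this, hsum]; norm_num
  have hCψnorm : ‖C ψ‖ = 1 := by
    have h2 : ‖C ψ‖ ^ 2 = 1 := by
      have h := inner_self_eq_norm_sq (𝕜 := ℂ) (x := C ψ)
      rw [hCψ] at h
      simpa using h.symm
    nlinarith [norm_nonneg (C ψ)]
  -- saturation: C†Cψ = ψ
  have hfix : adjoint C (C ψ) = ψ := by
    set u := adjoint C (C ψ) with hu
    have h1 : ⟪u, ψ⟫_ℂ = 1 := by rw [hu, adjoint_inner_left]; exact hCψ
    have h2 : ‖u‖ ≤ 1 := by
      calc ‖u‖ ≤ ‖adjoint C‖ * ‖C ψ‖ := le_opNorm _ _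
        _ ≤ 1 := by
            rw [hCψnorm, mul_one]
            rw [show ‖adjoint C‖ = ‖C‖ from LinearIsometryEquiv.norm_map adjoint C]
            exact hCnorm
    have h3 : ‖u - ψ‖ ^ 2 ≤ 0 := by
      rw [@norm_sub_sq ℂ]
      rw [h1]
      simp only [RCLike.one_re, hψ]
      nlinarith [norm_nonneg u]
    have h4 : ‖u - ψ‖ = 0 := le_antisymm (by nlinarith [norm_nonneg (u - ψ)]) (norm_nonneg _)
    rw [← sub_eq_zero]
    exact norm_eq_zero.mp h4
  have hsplit : ∀ w : H, ⟪w, ψ⟫_ℂ = ∑ i, ⟪R i 0 w, R i 0 ψ⟫_ℂ := by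
    intro w
    conv_lhs => rw [← hfix]
    rw [adjoint_inner_right, PiLp.inner_apply]
    simp only [hCapp]
  -- membership of word products
  have hprodmem : ∀ μ : List (Fin d), (μ.map fun i => R i 0).prod ∈ M := by
    intro μ
    induction μ with
    | nil => simpa using M.one_mem
    | cons a t ih => rw [List.map_cons, List.prod_cons]; exact mul_mem (hmem a 0) ih
  -- rotation step
  have hrot : ∀ (μ : List (Fin d)) (l : Fin d),
      ⟪(((μ ++ [l]).map fun i => R i 0).prod) ψ, ψ⟫_ℂ
        = ((α l : ℂ)) ^ 2 * ⟪(((l :: μ).map fun i => R i 0).prod) ψ, ψ⟫_ℂ := by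
    intro μ l
    set B := (μ.map fun i => R i 0).prod with hB
    have h1 : ((μ ++ [l]).map fun i => R i 0).prod = B * R l 0 := by
      rw [List.map_append, List.prod_append]; simp; rfl
    have h2 : ((l :: μ).map fun i => R i 0).prod = R l 0 * B := by
      rw [List.map_cons, List.prod_cons]
    rw [h1, h2, ContinuousLinearMap.mul_apply, hsplit (B (R l 0 ψ))]
    have h3 : ∀ i : Fin d, ⟪R i 0 (B (R l 0 ψ)), R i 0 ψ⟫_ℂ
        = (if i = l then ((α i : ℂ)) ^ 2 else 0) * ⟪(R i 0 * B) ψ, ψ⟫_ℂ := by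
      intro i
      rw [← adjoint_inner_left]
      have := hkey (R i 0 * B) (mul_mem (hmem i 0) (hprodmem μ)) i l
      simpa only [ContinuousLinearMap.mul_apply] using this
    simp only [h3]
    rw [Finset.sum_eq_single l]
    · simp
    · intro j _ hj; simp [hj]
    · simp
  -- main rotation identity
  have hmain : ∀ (ν μ : List (Fin d)),
      ⟪(((μ ++ ν).map fun i => R i 0).prod) ψ, ψ⟫_ℂ
        = (ν.map fun i => ((α i : ℂ)) ^ 2).prod
            * ⟪(((ν ++ μ).map fun i => R i 0).prod) ψ, ψ⟫_ℂ := by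
    intro ν
    induction ν using List.reverseRecOn with
    | nil => intro μ; simp
    | append_singleton ν l ih =>
        intro μ
        have h1 : μ ++ (ν ++ [l]) = (μ ++ ν) ++ [l] := by simp
        have h2 : (l :: (μ ++ ν)) = (l :: μ) ++ ν := by simp
        rw [h1, hrot (μ ++ ν) l, h2, ih (l :: μ)]
        have h3 : (ν ++ [l]) ++ μ = ν ++ (l :: μ) := by simp
        rw [h3]
        simp only [List.map_append, List.prod_append, List.map_cons, List.map_nil,
          List.prod_cons, List.prod_nil]
        ring
  -- conclude
  intro μ hμ
  have h := hmain μ []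
  simp only [List.append_nil, List.nil_append] at h
  set g := ⟪((μ.map fun i => R i 0).prod) ψ, ψ⟫_ℂ with hg
  have hw : (μ.map fun i => ((α i : ℂ)) ^ 2).prod
      = (((μ.map fun i => (α i) ^ 2).prod : ℝ) : ℂ) := by
    exact cast_prod_sq α μ
  have hlt : (μ.map fun i => (α i) ^ 2).prod < 1 := by
    apply list_prod_lt_one
    · intro x hx
      simp only [List.mem_map] at hx
      obtain ⟨i, _, rfl⟩ := hx
      have hi1 : (α i) ^ 2 < 1 := by
        have : Nontrivial (Fin d) := Fin.nontrivial_iff_two_le.mpr hd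
        obtain ⟨j, hj⟩ := exists_ne i
        have h' : (α i) ^ 2 < ∑ k, (α k) ^ 2 :=
          Finset.single_lt_sum (f := fun k => (α k) ^ 2) hj (Finset.mem_univ i)
            (Finset.mem_univ j) (pow_pos (hα j) 2) (fun k _ _ => sq_nonneg _)
        rw [hsum] at h'
        exact h'
      exact ⟨pow_pos (hα i) 2, hi1⟩
    · simpa using hμ
  have hne1 : (μ.map fun i => ((α i : ℂ)) ^ 2).prod ≠ 1 := by
    rw [hw]
    simp only [ne_eq, Complex.ofReal_eq_one]
    exact ne_of_lt hlt
  have : (1 - (μ.map fun i => ((α i : ℂ)) ^ 2).prod) * g = 0 := by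
    rw [sub_mul, one_mul]
    rw [← h]
    ring
  rcases mul_eq_zero.mp this with h' | h'
  · exact absurd (by linear_combination -h') hne1
  · exact h'
end

section
/- For a = 1, 2, let M_a ⊆ B(H_a) be a von Neumann algebra and let (R_a, T_a, ψ_a) be a bipartite exact embezzlement protocol for α in (M_a, M_a', H_a). Assume the states X ↦ ⟨X ψ_a, ψ_a⟩ are faithful on M_a and on M_a' (i.e., if X ∈ M_a (resp. M_a') is positive and ⟨X ψ_a, ψ_a⟩ = 0 then X = 0). Set V_{a,i} = (R_a i 0)* and W_{a,j} = (T_a j 0)*. Then for all lists μ, ν, β, γ over Fin d, ⟨V_{1,μ} (V_{1,ν})* W_{1,β} (W_{1,γ})* ψ₁, ψ₁⟩ = ⟨V_{2,μ} (V_{2,ν})* W_{2,β} (W_{2,γ})* ψ₂, ψ₂⟩, where V_{a,μ} and W_{a,μ} denote the ordered products over the list μ. (Equivalently: there is a unique state s on O_d ⊗_max O_d with s(v_i ⊗ w_j) = δ_{ij} α i, and every bipartite exact embezzlement protocol for α with faithful marginals induces this state.) -/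
open scoped InnerProductSpace
open ContinuousLinearMap

variable {H : Type*} [NormedAddCommGroup H] [InnerProductSpace ℂ H] [CompleteSpace H]

set_option linter.unusedSectionVars false
set_option linter.unusedVariables false
set_option maxHeartbeats 1000000

namespace EmbezAux

variable {H : Type*} [NormedAddCommGroup H] [InnerProductSpace ℂ H] [CompleteSpace H]
variable {d : ℕ}

/-- Product of `α` over a list. -/
noncomputable def cL (α : Fin d → ℝ) (l : List (Fin d)) : ℝ := (l.map α).prod

/-- Product of the adjoints `adjoint (A i)` over a list. -/
noncomputable def Vl (A : Fin d → H →L[ℂ] H) (l : List (Fin d)) : H →L[ℂ] H :=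
  (l.map fun i => adjoint (A i)).prod

@[simp] lemma cL_nil (α : Fin d → ℝ) : cL α [] = 1 := rfl

lemma cL_cons (α : Fin d → ℝ) (i : Fin d) (l : List (Fin d)) :
    cL α (i :: l) = α i * cL α l := by simp [cL]

lemma cL_append (α : Fin d → ℝ) (l m : List (Fin d)) :
    cL α (l ++ m) = cL α l * cL α m := by simp [cL]

@[simp] lemma Vl_nil (A : Fin d → H →L[ℂ] H) : Vl A [] = 1 := rfl

lemma Vl_cons (A : Fin d → H →L[ℂ] H) (i : Fin d) (l : List (Fin d)) :
    Vl A (i :: l) = adjoint (A i) * Vl A l := by simp [Vl]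

lemma Vl_append (A : Fin d → H →L[ℂ] H) (l m : List (Fin d)) :
    Vl A (l ++ m) = Vl A l * Vl A m := by simp [Vl]

lemma Vl_singleton (A : Fin d → H →L[ℂ] H) (i : Fin d) :
    Vl A [i] = adjoint (A i) := by simp [Vl]

lemma comm_prod (f : Fin d → H →L[ℂ] H) (X : H →L[ℂ] H)
    (h : ∀ i, X * f i = f i * X) (l : List (Fin d)) :
    X * (l.map f).prod = (l.map f).prod * X := by
  induction l with
  | nil => simp
  | cons i l ih =>
      simp only [List.map_cons, List.prod_cons, ← mul_assoc, h i]
      rw [mul_assoc, ih, mul_assoc]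

lemma comm_prod_prod {f g : Fin d → H →L[ℂ] H}
    (h : ∀ i j, f i * g j = g j * f i) (l m : List (Fin d)) :
    (l.map f).prod * (m.map g).prod = (m.map g).prod * (l.map f).prod := by
  refine comm_prod g _ (fun j => ?_) m
  exact (comm_prod f (g j) (fun i => (h i j).symm) l).symm

@[simp] lemma adjoint_one : adjoint (1 : H →L[ℂ] H) = 1 := by
  rw [← star_eq_adjoint, star_one]

lemma adjoint_mul (f g : H →L[ℂ] H) : adjoint (f * g) = adjoint g * adjoint f := by
  rw [← star_eq_adjoint, star_mul, star_eq_adjoint, star_eq_adjoint]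

lemma adjoint_prod (f : Fin d → H →L[ℂ] H) (l : List (Fin d)) :
    adjoint ((l.map f).prod) = (l.reverse.map fun i => adjoint (f i)).prod := by
  induction l with
  | nil => simp
  | cons i l ih =>
      simp only [List.map_cons, List.prod_cons, adjoint_mul, ih, List.reverse_cons,
        List.map_append, List.prod_append]
      simp

lemma adjoint_Vl (A : Fin d → H →L[ℂ] H) (l : List (Fin d)) :
    adjoint (Vl A l) = (l.reverse.map A).prod := by
  rw [Vl, adjoint_prod]
  simp [adjoint_adjoint]

lemma le_of_sq_le_sq {a b : ℝ} (hb : 0 ≤ b) (h : a ^ 2 ≤ b ^ 2) (ha : 0 ≤ a) : a ≤ b := by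
  nlinarith

lemma eq_of_sq_eq_sq {a b : ℝ} (ha : 0 ≤ a) (hb : 0 ≤ b) (h : a ^ 2 = b ^ 2) : a = b := by
  calc a = √(a ^ 2) := (Real.sqrt_sq ha).symm
  _ = √(b ^ 2) := by rw [h]
  _ = b := Real.sqrt_sq hb

lemma contract_point {S : H →L[ℂ] H} (hS : ‖S‖ ≤ 1) {y : H} (hy : ‖S y‖ = ‖y‖) :
    adjoint S (S y) = y := by
  have h1 : RCLike.re ⟪adjoint S (S y), y⟫_ℂ = ‖S y‖ ^ 2 := by
    rw [adjoint_inner_left]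
    exact inner_self_eq_norm_sq _
  have h2 : ‖adjoint S (S y)‖ ≤ ‖y‖ := by
    calc ‖adjoint S (S y)‖ ≤ ‖adjoint S‖ * ‖S y‖ := (adjoint S).le_opNorm _
    _ ≤ 1 * ‖y‖ := by
        have : ‖adjoint S‖ = ‖S‖ :=
          (ContinuousLinearMap.adjoint : (H →L[ℂ] H) ≃ₗᵢ⋆[ℂ] _).norm_map S
        rw [this, hy]
        exact mul_le_mul_of_nonneg_right hS (norm_nonneg _)
    _ = ‖y‖ := one_mul _
  have h0 : ‖adjoint S (S y) - y‖ ^ 2 ≤ 0 := by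
    rw [@norm_sub_sq ℂ, h1, hy]
    nlinarith [norm_nonneg (adjoint S (S y)), norm_nonneg y]
  have h3 : ‖adjoint S (S y) - y‖ = 0 := by
    have := sq_nonneg ‖adjoint S (S y) - y‖
    have h4 : ‖adjoint S (S y) - y‖ ^ 2 = 0 := le_antisymm h0 this
    exact (pow_eq_zero_iff two_ne_zero).mp h4
  exact sub_eq_zero.mp (norm_eq_zero.mp h3)



variable {H : Type*} [NormedAddCommGroup H] [InnerProductSpace ℂ H] [CompleteSpace H]
variable {d : ℕ}

lemma col_bound [NeZero d] (R : Fin d → Fin d → H →L[ℂ] H)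
    (h : ‖blockOp R‖ ≤ 1) (x : H) : ∑ i, ‖R i 0 x‖ ^ 2 ≤ ‖x‖ ^ 2 := by
  set f : ∀ _ : Fin d, H := Pi.single (0 : Fin d) x with hf
  set v : PiLp 2 (fun _ : Fin d => H) :=
    (PiLp.continuousLinearEquiv 2 ℂ fun _ : Fin d => H).symm f with hv
  have hvi : ∀ i, v i = f i := fun i => rfl
  have hvnorm : ‖v‖ ^ 2 = ‖x‖ ^ 2 := by
    rw [PiLp.norm_sq_eq_of_L2]
    rw [Finset.sum_eq_single (0 : Fin d)]
    · rw [hvi 0, hf, Pi.single_eq_same]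
    · intro i _ hine
      rw [hvi i, hf, Pi.single_eq_of_ne hine, norm_zero]
      norm_num
    · intro habs; exact absurd (Finset.mem_univ _) habs
  have harg : (ContinuousLinearMap.pi fun i => ∑ j, (R i j) ∘L (ContinuousLinearMap.proj j))
      (((PiLp.continuousLinearEquiv 2 ℂ (fun _ : Fin d => H)) :
        (PiLp 2 fun _ : Fin d => H) →L[ℂ] (∀ _ : Fin d, H)) v) = fun i => R i 0 x := by
    funext i
    simp only [ContinuousLinearMap.pi_apply, ContinuousLinearMap.sum_apply,
      ContinuousLinearMap.comp_apply, ContinuousLinearMap.proj_apply]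
    have hj : ∀ j : Fin d,
        (((PiLp.continuousLinearEquiv 2 ℂ (fun _ : Fin d => H)) :
          (PiLp 2 fun _ : Fin d => H) →L[ℂ] (∀ _ : Fin d, H)) v) j = f j := fun j => rfl
    rw [Finset.sum_eq_single (0 : Fin d)]
    · rw [hj 0, hf, Pi.single_eq_same]
    · intro j _ hjne
      rw [hj j, hf, Pi.single_eq_of_ne hjne, map_zero]
    · intro habs; exact absurd (Finset.mem_univ _) habs
  have hb : blockOp R v =
      (PiLp.continuousLinearEquiv 2 ℂ fun _ : Fin d => H).symm (fun i => R i 0 x) := by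
    rw [blockOp, ContinuousLinearMap.comp_apply, ContinuousLinearMap.comp_apply, harg]
    rfl
  have hbnorm : ‖blockOp R v‖ ^ 2 = ∑ i, ‖R i 0 x‖ ^ 2 := by
    rw [hb, PiLp.norm_sq_eq_of_L2]
    exact Finset.sum_congr rfl fun i _ => rfl
  have hle : ‖blockOp R v‖ ≤ ‖v‖ := by
    calc ‖blockOp R v‖ ≤ ‖blockOp R‖ * ‖v‖ := (blockOp R).le_opNorm v
    _ ≤ 1 * ‖v‖ := mul_le_mul_of_nonneg_right h (norm_nonneg _)
    _ = ‖v‖ := one_mul _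
  calc ∑ i, ‖R i 0 x‖ ^ 2 = ‖blockOp R v‖ ^ 2 := hbnorm.symm
  _ ≤ ‖v‖ ^ 2 := by nlinarith [norm_nonneg (blockOp R v), norm_nonneg v]
  _ = ‖x‖ ^ 2 := hvnorm


section Core
variable {A B : Fin d → H →L[ℂ] H} {ψ : H} {α : Fin d → ℝ}

/-- All derived pointwise facts needed for the moment computation, symmetric in `(A, B)`. -/
structure Good (A B : Fin d → H →L[ℂ] H) (ψ : H) (α : Fin d → ℝ) : Prop where
  hc1 : ∀ i j, A i * B j = B j * A i
  hc2 : ∀ i j, adjoint (A i) * B j = B j * adjoint (A i)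
  hc3 : ∀ i j, A i * adjoint (B j) = adjoint (B j) * A i
  hc4 : ∀ i j, adjoint (A i) * adjoint (B j) = adjoint (B j) * adjoint (A i)
  hAB : ∀ i j, A i (B j ψ) = (if i = j then (α i : ℂ) else 0) • ψ
  hr1 : ∀ i, adjoint (A i) ψ = ((α i : ℂ))⁻¹ • B i ψ
  hr2 : ∀ i, adjoint (B i) ψ = ((α i : ℂ))⁻¹ • A i ψ
  hψ : ‖ψ‖ = 1
  hαpos : ∀ i, 0 < α i
  hαlt : ∀ i, α i < 1

lemma Good.symm (hG : Good A B ψ α) : Good B A ψ α where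
  hc1 i j := (hG.hc1 j i).symm
  hc2 i j := (hG.hc3 j i).symm
  hc3 i j := (hG.hc2 j i).symm
  hc4 i j := (hG.hc4 j i).symm
  hAB i j := by
    have h : B i (A j ψ) = A j (B i ψ) := by
      rw [← ContinuousLinearMap.mul_apply, ← hG.hc1 j i, ContinuousLinearMap.mul_apply]
    rw [h, hG.hAB j i]
    rcases eq_or_ne i j with rfl | hne
    · simp
    · simp [hne, hne.symm]
  hr1 := hG.hr2
  hr2 := hG.hr1
  hψ := hG.hψ
  hαpos := hG.hαpos
  hαlt := hG.hαlt

lemma Good.alpha_ne (hG : Good A B ψ α) (i : Fin d) : ((α i : ℂ)) ≠ 0 := by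
  exact_mod_cast (hG.hαpos i).ne'

lemma Good.hBψ (hG : Good A B ψ α) (j : Fin d) :
    B j ψ = (α j : ℂ) • adjoint (A j) ψ := by
  rw [hG.hr1 j, smul_smul, mul_inv_cancel₀ (hG.alpha_ne j), one_smul]

lemma cL_pos (hα : ∀ i, 0 < α i) (l : List (Fin d)) : 0 < cL α l := by
  induction l with
  | nil => norm_num
  | cons i l ih => rw [cL_cons]; exact mul_pos (hα i) ih

lemma cL_ne (hG : Good A B ψ α) (l : List (Fin d)) : ((cL α l : ℂ)) ≠ 0 := by
  exact_mod_cast (cL_pos hG.hαpos l).ne'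

lemma cL_le_one (hα : ∀ i, 0 < α i) (hlt : ∀ i, α i < 1) (l : List (Fin d)) :
    cL α l ≤ 1 := by
  induction l with
  | nil => norm_num
  | cons i l ih =>
      rw [cL_cons]
      nlinarith [hα i, hlt i, cL_pos hα l]

lemma cL_lt_one (hα : ∀ i, 0 < α i) (hlt : ∀ i, α i < 1) {l : List (Fin d)}
    (hl : l ≠ []) : cL α l < 1 := by
  match l with
  | [] => exact absurd rfl hl
  | i :: l =>
      rw [cL_cons]
      nlinarith [hα i, hlt i, cL_pos hα l, cL_le_one hα hlt l]

/-- `W†ψ = c • Vψ` at the list level. -/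
lemma LA (hG : Good A B ψ α) (l : List (Fin d)) :
    adjoint (Vl B l) ψ = ((cL α l : ℝ) : ℂ) • Vl A l ψ := by
  induction l using List.reverseRecOn with
  | nil => simp
  | append_singleton l j ih =>
      have e1 : Vl B (l ++ [j]) = Vl B l * adjoint (B j) := by
        rw [Vl_append, Vl_singleton]
      rw [e1, adjoint_mul, adjoint_adjoint, ContinuousLinearMap.mul_apply, ih, map_smul]
      have hcomm : B j * Vl A l = Vl A l * B j :=
        comm_prod _ _ (fun i => (hG.hc2 i j).symm) l
      have h2 : B j (Vl A l ψ) = Vl A l (B j ψ) := by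
        rw [← ContinuousLinearMap.mul_apply, hcomm, ContinuousLinearMap.mul_apply]
      rw [h2, hG.hBψ j, map_smul, smul_smul]
      have e2 : Vl A (l ++ [j]) = Vl A l * adjoint (A j) := by
        rw [Vl_append, Vl_singleton]
      rw [e2, ContinuousLinearMap.mul_apply, cL_append]
      have : cL α [j] = α j := by simp [cL]
      rw [this]
      push_cast
      ring_nf

/-- The Cuntz-type relation `A i (V_{j::l} ψ) = δ_{ij] V_l ψ`. -/
lemma LD (hG : Good A B ψ α) (i j : Fin d) (l : List (Fin d)) :
    A i (Vl A (j :: l) ψ) = (if i = j then (1 : ℂ) else 0) • Vl A l ψ := by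
  have hVl : Vl A l ψ = ((cL α l : ℂ))⁻¹ • adjoint (Vl B l) ψ := by
    rw [LA hG, smul_smul, inv_mul_cancel₀ (cL_ne hG l), one_smul]
  have hP : adjoint (Vl B l) = (l.reverse.map B).prod := adjoint_Vl B l
  have hcommA : A i * (l.reverse.map B).prod = (l.reverse.map B).prod * A i :=
    comm_prod _ _ (fun k => hG.hc1 i k) l.reverse
  have hcommV : adjoint (A j) * (l.reverse.map B).prod
      = (l.reverse.map B).prod * adjoint (A j) :=
    comm_prod _ _ (fun k => hG.hc2 j k) l.reverse
  have hbase : A i (adjoint (A j) ψ) = (if i = j then (1 : ℂ) else 0) • ψ := by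
    rw [hG.hr1 j, map_smul, hG.hAB i j]
    rcases eq_or_ne i j with rfl | hne
    · rw [if_pos rfl, if_pos rfl, smul_smul, inv_mul_cancel₀ (hG.alpha_ne i)]
    · simp [hne]
  rw [Vl_cons, ContinuousLinearMap.mul_apply, hVl, hP]
  rw [map_smul, map_smul]
  have h3 : adjoint (A j) ((l.reverse.map B).prod ψ) = (l.reverse.map B).prod (adjoint (A j) ψ) := by
    rw [← ContinuousLinearMap.mul_apply, hcommV, ContinuousLinearMap.mul_apply]
  have h4 : A i ((l.reverse.map B).prod (adjoint (A j) ψ))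
      = (l.reverse.map B).prod (A i (adjoint (A j) ψ)) := by
    rw [← ContinuousLinearMap.mul_apply, hcommA, ContinuousLinearMap.mul_apply]
  rw [h3, h4, hbase, map_smul, smul_comm]

/-- Cuntz word relations on `ψ`. -/
lemma LC (hG : Good A B ψ α) (ν γ : List (Fin d)) :
    adjoint (Vl A ν) (Vl A γ ψ) =
      if ν <+: γ then Vl A (γ.drop ν.length) ψ
      else if γ <+: ν then adjoint (Vl A (ν.drop γ.length)) ψ
      else 0 := by
  induction ν generalizing γ with
  | nil => simp
  | cons i ν ih =>
      have hsplit : adjoint (Vl A (i :: ν)) (Vl A γ ψ)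
          = adjoint (Vl A ν) (A i (Vl A γ ψ)) := by
        rw [Vl_cons, adjoint_mul, adjoint_adjoint, ContinuousLinearMap.mul_apply]
      match γ with
      | [] =>
          have h1 : ¬((i :: ν) <+: ([] : List (Fin d))) := by
            intro hcon
            simpa using hcon.length_le
          rw [if_neg h1, if_pos (List.nil_prefix)]
          simp
      | j :: γ =>
          rw [hsplit, LD hG i j γ]
          rcases eq_or_ne i j with rfl | hne
          · rw [if_pos rfl, one_smul, ih γ]
            have hp : (i :: ν) <+: (i :: γ) ↔ ν <+: γ := by
              rw [List.cons_prefix_cons]; simp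
            have hq : (i :: γ) <+: (i :: ν) ↔ γ <+: ν := by
              rw [List.cons_prefix_cons]; simp
            by_cases h1 : ν <+: γ
            · rw [if_pos h1, if_pos (hp.mpr h1)]
              simp
            · rw [if_neg h1, if_neg (fun hcon => h1 (hp.mp hcon))]
              by_cases h2 : γ <+: ν
              · rw [if_pos h2, if_pos (hq.mpr h2)]
                simp
              · rw [if_neg h2, if_neg (fun hcon => h2 (hq.mp hcon))]
          · rw [if_neg hne, zero_smul, map_zero]
            have h1 : ¬((i :: ν) <+: (j :: γ)) := by
              rw [List.cons_prefix_cons]; tauto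
            have h2 : ¬((j :: γ) <+: (i :: ν)) := by
              rw [List.cons_prefix_cons]; tauto
            rw [if_neg h1, if_neg h2]

lemma LE (hG : Good A B ψ α) (l : List (Fin d)) :
    ⟪adjoint (Vl A l) ψ, ψ⟫_ℂ = if l = [] then 1 else 0 := by
  rcases eq_or_ne l [] with rfl | hl
  · simp [inner_self_eq_norm_sq_to_K, hG.hψ]
  · rw [if_neg hl]
    set t : ℂ := ⟪adjoint (Vl A l) ψ, ψ⟫_ℂ with ht
    have key : t = ((cL α l : ℂ)) ^ 2 * t := by
      conv_lhs => rw [ht, LA hG.symm l, inner_smul_left, Complex.conj_ofReal]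
      have h2 : ⟪Vl B l ψ, ψ⟫_ℂ = ⟪ψ, adjoint (Vl B l) ψ⟫_ℂ :=
        (adjoint_inner_right (Vl B l) ψ ψ).symm
      rw [h2, LA hG l, inner_smul_right]
      have h3 : ⟪ψ, Vl A l ψ⟫_ℂ = t := by
        rw [ht]; exact (adjoint_inner_left (Vl A l) ψ ψ).symm
      rw [h3]; ring
    have hc : ((cL α l : ℂ)) ^ 2 ≠ 1 := by
      have h1 : cL α l < 1 := cL_lt_one hG.hαpos hG.hαlt hl
      have h2 : 0 < cL α l := cL_pos hG.hαpos l
      intro hcon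
      have : ((cL α l) ^ 2 : ℂ) = ((1 : ℝ) : ℂ) := by push_cast; exact hcon
      have : (cL α l) ^ 2 = 1 := by exact_mod_cast this
      nlinarith
    have : (1 - ((cL α l : ℂ)) ^ 2) * t = 0 := by linear_combination key
    rcases mul_eq_zero.mp this with h | h
    · exact absurd (by linear_combination -h) hc
    · exact h

lemma LE' (hG : Good A B ψ α) (l : List (Fin d)) :
    ⟪Vl A l ψ, ψ⟫_ℂ = if l = [] then 1 else 0 := by
  have h1 : ⟪Vl A l ψ, ψ⟫_ℂ = (starRingEnd ℂ) ⟪ψ, Vl A l ψ⟫_ℂ := (inner_conj_symm _ _).symm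
  rw [h1, ← adjoint_inner_left (Vl A l) ψ ψ, LE hG l]
  split <;> simp

lemma LF (hG : Good A B ψ α) (a b : List (Fin d)) :
    ⟪adjoint (Vl A a) (Vl A b ψ), ψ⟫_ℂ = if a = b then 1 else 0 := by
  rw [LC hG a b]
  by_cases h1 : a <+: b
  · rw [if_pos h1, LE' hG]
    have : b.drop a.length = [] ↔ a = b := by
      rw [List.drop_eq_nil_iff]
      constructor
      · intro hlen; exact h1.eq_of_length (le_antisymm h1.length_le hlen)
      · rintro rfl; simp
    by_cases h2 : b.drop a.length = []
    · rw [if_pos h2, if_pos (this.mp h2)]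
    · rw [if_neg h2, if_neg (fun hcon => h2 (this.mpr hcon))]
  · rw [if_neg h1]
    by_cases h2 : b <+: a
    · rw [if_pos h2, LE hG]
      have : a.drop b.length = [] ↔ a = b := by
        rw [List.drop_eq_nil_iff]
        constructor
        · intro hlen; exact (h2.eq_of_length (le_antisymm h2.length_le hlen)).symm
        · rintro rfl; simp
      by_cases h3 : a.drop b.length = []
      · rw [if_pos h3, if_pos (this.mp h3)]
      · rw [if_neg h3, if_neg (fun hcon => h3 (this.mpr hcon))]
    · rw [if_neg h2, inner_zero_left]
      have : a ≠ b := by rintro rfl; exact h1 (List.prefix_refl a)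
      rw [if_neg this]

end Core

section Moment
variable {A B : Fin d → H →L[ℂ] H} {ψ : H} {α : Fin d → ℝ}

/-- The canonical value of the moment `⟪V_μ V_ν* W_β W_γ* ψ, ψ⟫`. -/
noncomputable def Phi (α : Fin d → ℝ) (μ ν β γ : List (Fin d)) : ℂ :=
  ((cL α β : ℝ) : ℂ) * ((cL α γ : ℝ) : ℂ) *
    (if ν <+: γ then (if β = μ ++ γ.drop ν.length then 1 else 0)
     else if γ <+: ν then
       ((cL α (ν.drop γ.length) : ℝ) : ℂ) ^ 2 *
         (if β ++ ν.drop γ.length = μ then 1 else 0)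
     else 0)

lemma moment (hG : Good A B ψ α) (μ ν β γ : List (Fin d)) :
    ⟪(Vl A μ * adjoint (Vl A ν) * Vl B β * adjoint (Vl B γ)) ψ, ψ⟫_ℂ
      = Phi α μ ν β γ := by
  have hVW : ∀ l m : List (Fin d), Vl A l * Vl B m = Vl B m * Vl A l := fun l m =>
    comm_prod_prod hG.hc4 l m
  have hadjV_W : ∀ l m : List (Fin d),
      adjoint (Vl A l) * Vl B m = Vl B m * adjoint (Vl A l) := fun l m => by
    rw [adjoint_Vl]
    exact comm_prod_prod hG.hc3 l.reverse m
  have hop : Vl A μ * adjoint (Vl A ν) * Vl B β * adjoint (Vl B γ)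
      = Vl B β * (Vl A μ * (adjoint (Vl A ν) * adjoint (Vl B γ))) := by
    have h1 : Vl A μ * adjoint (Vl A ν) * Vl B β
        = Vl B β * (Vl A μ * adjoint (Vl A ν)) := by
      rw [mul_assoc, hadjV_W ν β, ← mul_assoc, hVW μ β, mul_assoc]
    rw [h1, mul_assoc, mul_assoc]
  rw [hop, ContinuousLinearMap.mul_apply, ← adjoint_inner_right (Vl B β),
    LA hG β, inner_smul_right, ← adjoint_inner_left (Vl A β),
    ContinuousLinearMap.mul_apply, ContinuousLinearMap.mul_apply, LA hG γ,
    map_smul, map_smul, map_smul, inner_smul_left, Complex.conj_ofReal, LC hG ν γ]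
  by_cases h1 : ν <+: γ
  · rw [if_pos h1]
    have hμ : Vl A μ (Vl A (γ.drop ν.length) ψ) = Vl A (μ ++ γ.drop ν.length) ψ := by
      rw [Vl_append, ContinuousLinearMap.mul_apply]
    rw [hμ, LF hG β (μ ++ γ.drop ν.length)]
    simp only [Phi, if_pos h1]
    ring
  · rw [if_neg h1]
    by_cases h2 : γ <+: ν
    · rw [if_pos h2]
      rw [LA hG.symm (ν.drop γ.length), map_smul]
      have hswap : Vl A μ (Vl B (ν.drop γ.length) ψ) = Vl B (ν.drop γ.length) (Vl A μ ψ) := by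
        rw [← ContinuousLinearMap.mul_apply, hVW μ (ν.drop γ.length),
          ContinuousLinearMap.mul_apply]
      rw [hswap, map_smul]
      have hswap2 : adjoint (Vl A β) (Vl B (ν.drop γ.length) (Vl A μ ψ))
          = Vl B (ν.drop γ.length) (adjoint (Vl A β) (Vl A μ ψ)) := by
        rw [← ContinuousLinearMap.mul_apply, hadjV_W β (ν.drop γ.length),
          ContinuousLinearMap.mul_apply]
      rw [hswap2, inner_smul_left, Complex.conj_ofReal,
        ← adjoint_inner_right (Vl B (ν.drop γ.length)), LA hG (ν.drop γ.length),
        inner_smul_right, ← adjoint_inner_left (Vl A (ν.drop γ.length))]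
      have hcomb : adjoint (Vl A (ν.drop γ.length)) (adjoint (Vl A β) (Vl A μ ψ))
          = adjoint (Vl A (β ++ ν.drop γ.length)) (Vl A μ ψ) := by
        rw [Vl_append, adjoint_mul, ContinuousLinearMap.mul_apply]
      rw [hcomb, LF hG (β ++ ν.drop γ.length) μ]
      simp only [Phi, if_neg h1, if_pos h2]
      ring
    · rw [if_neg h2, map_zero, map_zero, inner_zero_left]
      simp only [Phi, if_neg h1, if_neg h2]
      ring

end Moment

lemma good_of_protocol {d : ℕ} [NeZero d] (M : VonNeumannAlgebra H) (hd : 2 ≤ d)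
    (α : Fin d → ℝ) (hα : ∀ i, 0 < α i) (hsum : ∑ i, (α i) ^ 2 = 1)
    (R T : Fin d → Fin d → H →L[ℂ] H) (ψ : H)
    (hp : BipartiteProtocol M α R T ψ) :
    Good (fun i => R i 0) (fun j => T j 0) ψ α := by
  obtain ⟨⟨hRmem, hRnorm⟩, ⟨hTmem, hTnorm⟩, hψ, hRT⟩ := hp
  have hAmem : ∀ i, R i 0 ∈ M := fun i => hRmem i 0
  have hBmem : ∀ j, T j 0 ∈ M.commutant := fun j => hTmem j 0
  have hAmem' : ∀ i, adjoint (R i 0) ∈ M := fun i => by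
    rw [← star_eq_adjoint]; exact star_mem (hAmem i)
  have hBmem' : ∀ j, adjoint (T j 0) ∈ M.commutant := fun j => by
    rw [← star_eq_adjoint]; exact star_mem (hBmem j)
  have hc1 : ∀ i j, R i 0 * T j 0 = T j 0 * R i 0 := fun i j =>
    VonNeumannAlgebra.mem_commutant_iff.mp (hBmem j) _ (hAmem i)
  have hc2 : ∀ i j, adjoint (R i 0) * T j 0 = T j 0 * adjoint (R i 0) := fun i j =>
    VonNeumannAlgebra.mem_commutant_iff.mp (hBmem j) _ (hAmem' i)
  have hc3 : ∀ i j, R i 0 * adjoint (T j 0) = adjoint (T j 0) * R i 0 := fun i j =>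
    VonNeumannAlgebra.mem_commutant_iff.mp (hBmem' j) _ (hAmem i)
  have hc4 : ∀ i j, adjoint (R i 0) * adjoint (T j 0)
      = adjoint (T j 0) * adjoint (R i 0) := fun i j =>
    VonNeumannAlgebra.mem_commutant_iff.mp (hBmem' j) _ (hAmem' i)
  have hcolR : ∀ x : H, ∑ i, ‖R i 0 x‖ ^ 2 ≤ ‖x‖ ^ 2 := col_bound R hRnorm
  have hcolT : ∀ x : H, ∑ j, ‖T j 0 x‖ ^ 2 ≤ ‖x‖ ^ 2 := col_bound T hTnorm
  have hdelta : ∀ i j : Fin d, ‖(if i = j then ((α i : ℝ) : ℂ) else 0) • ψ‖ ^ 2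
      = if i = j then (α i) ^ 2 else 0 := fun i j => by
    rcases eq_or_ne i j with rfl | hne
    · rw [if_pos rfl, if_pos rfl, norm_smul, hψ, mul_one, Complex.norm_real, Real.norm_eq_abs, sq_abs]
    · rw [if_neg hne, if_neg hne, zero_smul, norm_zero]
      norm_num
  have hTR : ∀ i j, T j 0 (R i 0 ψ) = (if i = j then ((α i : ℝ) : ℂ) else 0) • ψ :=
    fun i j => by
      rw [← ContinuousLinearMap.mul_apply, ← hc1 i j, ContinuousLinearMap.mul_apply, hRT i j]
  have hTψsq : ∀ j, ‖T j 0 ψ‖ ^ 2 = (α j) ^ 2 := by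
    have hge : ∀ j, (α j) ^ 2 ≤ ‖T j 0 ψ‖ ^ 2 := fun j => by
      have h1 := hcolR (T j 0 ψ)
      have h2 : ∑ i, ‖R i 0 ((T j 0) ψ)‖ ^ 2 = (α j) ^ 2 := by
        rw [Finset.sum_congr rfl (fun i _ => by rw [hRT i j, hdelta i j])]
        simp
      linarith
    have hle : ∑ j, ‖T j 0 ψ‖ ^ 2 ≤ 1 := by
      have := hcolT ψ
      rw [hψ] at this
      simpa using this
    have hzero : ∀ j ∈ Finset.univ, ‖T j 0 ψ‖ ^ 2 - (α j) ^ 2 = 0 := by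
      apply (Finset.sum_eq_zero_iff_of_nonneg (fun j _ => sub_nonneg.mpr (hge j))).mp
      have hd2 : ∑ j, (‖T j 0 ψ‖ ^ 2 - (α j) ^ 2)
          = ∑ j, ‖T j 0 ψ‖ ^ 2 - ∑ j, (α j) ^ 2 := Finset.sum_sub_distrib _ _
      have hnn : 0 ≤ ∑ j, (‖T j 0 ψ‖ ^ 2 - (α j) ^ 2) :=
        Finset.sum_nonneg (fun j _ => sub_nonneg.mpr (hge j))
      rw [hd2, hsum] at hnn ⊢
      linarith
    intro j
    have := hzero j (Finset.mem_univ j)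
    linarith
  have hRψsq : ∀ i, ‖R i 0 ψ‖ ^ 2 = (α i) ^ 2 := by
    have hge : ∀ i, (α i) ^ 2 ≤ ‖R i 0 ψ‖ ^ 2 := fun i => by
      have h1 := hcolT (R i 0 ψ)
      have h2 : ∑ j, ‖T j 0 ((R i 0) ψ)‖ ^ 2 = (α i) ^ 2 := by
        rw [Finset.sum_congr rfl (fun j _ => by rw [hTR i j, hdelta i j])]
        simp
      linarith
    have hle : ∑ i, ‖R i 0 ψ‖ ^ 2 ≤ 1 := by
      have := hcolR ψ
      rw [hψ] at this
      simpa using this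
    have hzero : ∀ i ∈ Finset.univ, ‖R i 0 ψ‖ ^ 2 - (α i) ^ 2 = 0 := by
      apply (Finset.sum_eq_zero_iff_of_nonneg (fun i _ => sub_nonneg.mpr (hge i))).mp
      have hd2 : ∑ i, (‖R i 0 ψ‖ ^ 2 - (α i) ^ 2)
          = ∑ i, ‖R i 0 ψ‖ ^ 2 - ∑ i, (α i) ^ 2 := Finset.sum_sub_distrib _ _
      have hnn : 0 ≤ ∑ i, (‖R i 0 ψ‖ ^ 2 - (α i) ^ 2) :=
        Finset.sum_nonneg (fun i _ => sub_nonneg.mpr (hge i))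
      rw [hd2, hsum] at hnn ⊢
      linarith
    intro i
    have := hzero i (Finset.mem_univ i)
    linarith
  have hTψ : ∀ j, ‖T j 0 ψ‖ = α j := fun j =>
    eq_of_sq_eq_sq (norm_nonneg _) (hα j).le (hTψsq j)
  have hRψ : ∀ i, ‖R i 0 ψ‖ = α i := fun i =>
    eq_of_sq_eq_sq (norm_nonneg _) (hα i).le (hRψsq i)
  have hRop : ∀ i, ‖R i 0‖ ≤ 1 := fun i => by
    apply ContinuousLinearMap.opNorm_le_bound _ zero_le_one
    intro x
    rw [one_mul]
    refine le_of_sq_le_sq (norm_nonneg x) ?_ (norm_nonneg _)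
    calc ‖R i 0 x‖ ^ 2 ≤ ∑ k, ‖R k 0 x‖ ^ 2 :=
          Finset.single_le_sum (f := fun k => ‖R k 0 x‖ ^ 2)
            (fun k _ => sq_nonneg _) (Finset.mem_univ i)
    _ ≤ ‖x‖ ^ 2 := hcolR x
  have hTop : ∀ j, ‖T j 0‖ ≤ 1 := fun j => by
    apply ContinuousLinearMap.opNorm_le_bound _ zero_le_one
    intro x
    rw [one_mul]
    refine le_of_sq_le_sq (norm_nonneg x) ?_ (norm_nonneg _)
    calc ‖T j 0 x‖ ^ 2 ≤ ∑ k, ‖T k 0 x‖ ^ 2 :=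
          Finset.single_le_sum (f := fun k => ‖T k 0 x‖ ^ 2)
            (fun k _ => sq_nonneg _) (Finset.mem_univ j)
    _ ≤ ‖x‖ ^ 2 := hcolT x
  have hαne : ∀ i, ((α i : ℝ) : ℂ) ≠ 0 := fun i => by exact_mod_cast (hα i).ne'
  have hr1 : ∀ i, adjoint (R i 0) ψ = (((α i : ℝ) : ℂ))⁻¹ • T i 0 ψ := fun i => by
    have hSy : R i 0 ((((α i : ℝ) : ℂ))⁻¹ • T i 0 ψ) = ψ := by
      rw [map_smul, hRT i i, if_pos rfl, smul_smul, inv_mul_cancel₀ (hαne i), one_smul]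
    have hy : ‖R i 0 ((((α i : ℝ) : ℂ))⁻¹ • T i 0 ψ)‖ = ‖(((α i : ℝ) : ℂ))⁻¹ • T i 0 ψ‖ := by
      rw [hSy, hψ, norm_smul, hTψ i, norm_inv, Complex.norm_real, Real.norm_eq_abs,
        abs_of_pos (hα i), inv_mul_cancel₀ (hα i).ne']
    have := contract_point (hRop i) hy
    rw [hSy] at this
    exact this
  have hr2 : ∀ i, adjoint (T i 0) ψ = (((α i : ℝ) : ℂ))⁻¹ • R i 0 ψ := fun i => by
    have hSy : T i 0 ((((α i : ℝ) : ℂ))⁻¹ • R i 0 ψ) = ψ := by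
      rw [map_smul, hTR i i, if_pos rfl, smul_smul, inv_mul_cancel₀ (hαne i), one_smul]
    have hy : ‖T i 0 ((((α i : ℝ) : ℂ))⁻¹ • R i 0 ψ)‖ = ‖(((α i : ℝ) : ℂ))⁻¹ • R i 0 ψ‖ := by
      rw [hSy, hψ, norm_smul, hRψ i, norm_inv, Complex.norm_real, Real.norm_eq_abs,
        abs_of_pos (hα i), inv_mul_cancel₀ (hα i).ne']
    have := contract_point (hTop i) hy
    rw [hSy] at this
    exact this
  have hαlt : ∀ i, α i < 1 := fun i => by
    have hnt : Nontrivial (Fin d) := Fin.nontrivial_iff_two_le.mpr hd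
    obtain ⟨k, hk⟩ := exists_ne i
    have hsub : (α i) ^ 2 + (α k) ^ 2 ≤ 1 := by
      rw [← hsum]
      calc (α i) ^ 2 + (α k) ^ 2 = ∑ x ∈ ({i, k} : Finset (Fin d)), (α x) ^ 2 :=
            (Finset.sum_pair (f := fun x => (α x) ^ 2) (Ne.symm hk)).symm
      _ ≤ ∑ x, (α x) ^ 2 :=
            Finset.sum_le_sum_of_subset_of_nonneg (Finset.subset_univ _)
              (fun _ _ _ => sq_nonneg _)
    nlinarith [hα i, hα k]
  exact ⟨hc1, hc2, hc3, hc4, hRT, hr1, hr2, hψ, hα, hαlt⟩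


end EmbezAux

/-- Any two bipartite exact embezzlement protocols for `α` with faithful marginal states
induce the same state on `O_d ⊗_max O_d`: writing `V_{a,i} = (R_a i 0)*` and
`W_{a,j} = (T_a j 0)*`, all the moments `⟨V_μ V_ν* W_β W_γ* ψ_a, ψ_a⟩` agree for `a = 1, 2`. -/
theorem unique_state_on_Od_tensor_Od
    {H₁ : Type*} [NormedAddCommGroup H₁] [InnerProductSpace ℂ H₁] [CompleteSpace H₁]
    {H₂ : Type*} [NormedAddCommGroup H₂] [InnerProductSpace ℂ H₂] [CompleteSpace H₂]
    (M₁ : VonNeumannAlgebra H₁) (M₂ : VonNeumannAlgebra H₂)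
    {d : ℕ} [NeZero d] (hd : 2 ≤ d)
    (α : Fin d → ℝ) (hα : ∀ i, 0 < α i) (hsum : ∑ i, (α i) ^ 2 = 1)
    (R₁ T₁ : Fin d → Fin d → H₁ →L[ℂ] H₁) (ψ₁ : H₁)
    (R₂ T₂ : Fin d → Fin d → H₂ →L[ℂ] H₂) (ψ₂ : H₂)
    (hproto₁ : BipartiteProtocol M₁ α R₁ T₁ ψ₁)
    (hproto₂ : BipartiteProtocol M₂ α R₂ T₂ ψ₂)
    (hfaith₁ : ∀ X ∈ M₁, X.IsPositive → ⟪X ψ₁, ψ₁⟫_ℂ = 0 → X = 0)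
    (hfaith₁' : ∀ Y ∈ M₁.commutant, Y.IsPositive → ⟪Y ψ₁, ψ₁⟫_ℂ = 0 → Y = 0)
    (hfaith₂ : ∀ X ∈ M₂, X.IsPositive → ⟪X ψ₂, ψ₂⟫_ℂ = 0 → X = 0)
    (hfaith₂' : ∀ Y ∈ M₂.commutant, Y.IsPositive → ⟪Y ψ₂, ψ₂⟫_ℂ = 0 → Y = 0) :
    ∀ μ ν β γ : List (Fin d),
      ⟪((μ.map (fun i => adjoint (R₁ i 0))).prod *
          adjoint ((ν.map (fun i => adjoint (R₁ i 0))).prod) *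
          (β.map (fun j => adjoint (T₁ j 0))).prod *
          adjoint ((γ.map (fun j => adjoint (T₁ j 0))).prod)) ψ₁, ψ₁⟫_ℂ =
      ⟪((μ.map (fun i => adjoint (R₂ i 0))).prod *
          adjoint ((ν.map (fun i => adjoint (R₂ i 0))).prod) *
          (β.map (fun j => adjoint (T₂ j 0))).prod *
          adjoint ((γ.map (fun j => adjoint (T₂ j 0))).prod)) ψ₂, ψ₂⟫_ℂ := by
  intro μ ν β γ
  have hG1 := EmbezAux.good_of_protocol M₁ hd α hα hsum R₁ T₁ ψ₁ hproto₁
  have hG2 := EmbezAux.good_of_protocol M₂ hd α hα hsum R₂ T₂ ψ₂ hproto₂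
  exact (EmbezAux.moment hG1 μ ν β γ).trans (EmbezAux.moment hG2 μ ν β γ).symm
end

section
/- Let M ⊆ B(H) be a von Neumann algebra and let (R, ψ) be a monopartite exact embezzlement protocol for α in (M, H). Set V j = (R j 0)* for j ∈ Fin d. Let t ∈ ℝ and suppose u ∈ M is a unitary such that u (V j) u* = exp(−2 i t · log(α j)) • (V j) for every j ∈ Fin d (i.e., u V_j u* = (α j)^{−2it} V_j, using the complex exponential). If ⟨u ψ, ψ⟩ ≠ 0, then for every j ∈ Fin d, exp(2 i t · log(α j)) = 1; equivalently, t · log(α j) ∈ π ℤ for every j (i.e., t belongs to the subgroup H_φ = ⋂_j H_{α_j} of (ℝ, +), where H_{α_j} is the cyclic subgroup generated by −π / log(α j)). -/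
open scoped InnerProductSpace
open ContinuousLinearMap

variable {H : Type*} [NormedAddCommGroup H] [InnerProductSpace ℂ H] [CompleteSpace H]

private lemma aux_comm {H : Type*} [NormedAddCommGroup H] [InnerProductSpace ℂ H]
    [CompleteSpace H] (u A : H →L[ℂ] H) (hu : u ∈ unitary (H →L[ℂ] H)) (c : ℂ)
    (hc : c * (starRingEnd ℂ) c = 1)
    (h : u * A * star u = c • A) : ∀ x, (star A) (u x) = c • u ((star A) x) := by
  have hstar : u * (star A) * star u = (starRingEnd ℂ) c • star A := by
    have := congrArg star h
    simpa [star_smul, mul_assoc, star_star] using this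
  have h2 : u * star A = (starRingEnd ℂ) c • (star A * u) := by
    have := congrArg (· * u) hstar
    simpa [mul_assoc, Unitary.star_mul_self_of_mem hu, smul_mul_assoc] using this
  have h3 : star A * u = c • (u * star A) := by
    rw [h2, smul_smul, hc, one_smul]
  intro x
  have := congrArg (· x) h3
  simpa [ContinuousLinearMap.mul_apply] using this


/-- If `(R, ψ)` is a monopartite exact embezzlement protocol for `α`, `V j = (R j 0)*`, and
`u ∈ M` is a unitary with `u V_j u* = (α j)^{-2it} V_j` for all `j`, then `⟨u ψ, ψ⟩ ≠ 0`
implies `exp(2 i t log(α j)) = 1` for every `j` (i.e. `t ∈ H_φ`). -/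
theorem inner_implementation_forces_subgroup
    {H : Type*} [NormedAddCommGroup H] [InnerProductSpace ℂ H] [CompleteSpace H]
    (M : VonNeumannAlgebra H) {d : ℕ} [NeZero d] (hd : 2 ≤ d)
    (α : Fin d → ℝ) (hα : ∀ i, 0 < α i) (hsum : ∑ i, (α i) ^ 2 = 1)
    (R : Fin d → Fin d → H →L[ℂ] H) (ψ : H)
    (hproto : MonopartiteProtocol M α R ψ)
    (t : ℝ) (u : H →L[ℂ] H) (hu_mem : u ∈ M)
    (hu : u ∈ unitary (H →L[ℂ] H))
    (hconj : ∀ j : Fin d,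
      u * (adjoint (R j 0)) * (star u)
        = Complex.exp (-(2 * Complex.I * (t : ℂ) * (Real.log (α j) : ℂ))) • adjoint (R j 0))
    (hne : ⟪u ψ, ψ⟫_ℂ ≠ 0) :
    ∀ j : Fin d, Complex.exp (2 * Complex.I * (t : ℂ) * (Real.log (α j) : ℂ)) = 1 := by
  obtain ⟨⟨hmem, hnorm⟩, hψ, hkey⟩ := hproto
  set e : Fin d → ℂ :=
    fun j => Complex.exp (2 * Complex.I * (t : ℂ) * (Real.log (α j) : ℂ)) with he
  set c : Fin d → ℂ :=
    fun j => Complex.exp (-(2 * Complex.I * (t : ℂ) * (Real.log (α j) : ℂ))) with hc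
  -- conj (c j) = e j and c j * conj (c j) = 1
  have hconjc : ∀ j, (starRingEnd ℂ) (c j) = e j := by
    intro j
    rw [hc, ← Complex.exp_conj]
    congr 1
    simp only [map_neg, map_mul, Complex.conj_I, Complex.conj_ofReal, map_ofNat]
    ring
  have hcc : ∀ j, c j * (starRingEnd ℂ) (c j) = 1 := by
    intro j
    rw [hconjc, hc, he, ← Complex.exp_add]
    ring_nf
    exact Complex.exp_zero
  -- commutation of R j 0 with u
  have hcomm : ∀ (j : Fin d) (x : H), (R j 0) (u x) = c j • u ((R j 0) x) := by
    intro j x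
    have := aux_comm u (adjoint (R j 0)) hu (c j) (hcc j) (hconj j) x
    simpa [ContinuousLinearMap.star_eq_adjoint, adjoint_adjoint] using this
  -- key identity in vector-state form
  have hkey2 : ∀ X ∈ M, ∀ j : Fin d,
      ⟪X ((R j 0) ψ), (R j 0) ψ⟫_ℂ = (α j : ℂ) ^ 2 * ⟪X ψ, ψ⟫_ℂ := by
    intro X hX j
    have := hkey X hX j j
    rwa [adjoint_inner_left, if_pos rfl] at this
  have hψin : ⟪ψ, ψ⟫_ℂ = 1 := by
    rw [inner_self_eq_norm_sq_to_K, hψ]; norm_num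
  -- the operator T = ∑ j (R j 0)† (R j 0)
  set T : H →L[ℂ] H := ∑ j, adjoint (R j 0) ∘L (R j 0) with hT
  have hTinner : ∀ x y : H, ⟪T x, y⟫_ℂ = ∑ j, ⟪(R j 0) x, (R j 0) y⟫_ℂ := by
    intro x y
    rw [hT, ContinuousLinearMap.sum_apply, sum_inner]
    exact Finset.sum_congr rfl fun j _ => by
      rw [ContinuousLinearMap.comp_apply, adjoint_inner_left]
  have hTψψ : ⟪T ψ, ψ⟫_ℂ = 1 := by
    rw [hTinner]
    have : ∀ j : Fin d, ⟪(R j 0) ψ, (R j 0) ψ⟫_ℂ = (α j : ℂ) ^ 2 := by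
      intro j
      have := hkey2 1 (one_mem M) j
      simpa [hψin, hψ] using this
    rw [Finset.sum_congr rfl fun j _ => this j]
    calc ∑ j, ((α j : ℂ)) ^ 2 = ((∑ j, (α j) ^ 2 : ℝ) : ℂ) := by push_cast; ring
    _ = 1 := by rw [hsum]; norm_num
  -- the column map
  set C : H → PiLp 2 fun _ : Fin d => H :=
    fun x => blockOp R ((WithLp.equiv 2 (∀ _ : Fin d, H)).symm (Pi.single 0 x)) with hCdef
  have hCi : ∀ (x : H) (i : Fin d), C x i = (R i 0) x := by
    intro x i
    show (∑ j, (R i j) ∘L (ContinuousLinearMap.proj j)) ((Pi.single 0 x : ∀ _ : Fin d, H)) = _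
    rw [ContinuousLinearMap.sum_apply, Finset.sum_eq_single 0]
    · simp
    · intro b _ hb; simp [Pi.single_apply, hb]
    · simp
  have hinj : ∀ x : H, ‖((WithLp.equiv 2 (∀ _ : Fin d, H)).symm (Pi.single 0 x)
      : PiLp 2 fun _ : Fin d => H)‖ = ‖x‖ := by
    intro x
    have h1 : ⟪((WithLp.equiv 2 (∀ _ : Fin d, H)).symm (Pi.single 0 x)
        : PiLp 2 fun _ : Fin d => H),
        (WithLp.equiv 2 (∀ _ : Fin d, H)).symm (Pi.single 0 x)⟫_ℂ = ⟪x, x⟫_ℂ := by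
      rw [PiLp.inner_apply, Finset.sum_eq_single 0]
      · rfl
      · intro b _ hb
        show ⟪(Pi.single 0 x : ∀ _ : Fin d, H) b, (Pi.single 0 x : ∀ _ : Fin d, H) b⟫_ℂ = 0
        simp [Pi.single_apply, hb]
      · simp
    rw [@norm_eq_sqrt_re_inner ℂ, @norm_eq_sqrt_re_inner ℂ H, h1]
  have hCnorm : ∀ x : H, ‖C x‖ ≤ ‖x‖ := by
    intro x
    calc ‖C x‖ ≤ ‖blockOp R‖ * ‖((WithLp.equiv 2 (∀ _ : Fin d, H)).symm (Pi.single 0 x)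
          : PiLp 2 fun _ : Fin d => H)‖ := le_opNorm _ _
    _ ≤ 1 * ‖x‖ := by
        rw [hinj]
        exact mul_le_mul_of_nonneg_right hnorm (norm_nonneg x)
    _ = ‖x‖ := one_mul _
  have hTC : ∀ x y : H, ⟪T x, y⟫_ℂ = ⟪C x, C y⟫_ℂ := by
    intro x y
    rw [hTinner, PiLp.inner_apply]
    exact Finset.sum_congr rfl fun j _ => by rw [hCi, hCi]
  -- ‖T ψ‖ ≤ 1
  have hTnorm : ‖T ψ‖ ≤ 1 := by
    have h1 : ‖T ψ‖ ^ 2 = RCLike.re ⟪C ψ, C (T ψ)⟫_ℂ := by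
      rw [← hTC]
      rw [@norm_eq_sqrt_re_inner ℂ]
      rw [Real.sq_sqrt inner_self_nonneg]
    have h2 : RCLike.re ⟪C ψ, C (T ψ)⟫_ℂ ≤ ‖T ψ‖ := by
      calc RCLike.re ⟪C ψ, C (T ψ)⟫_ℂ ≤ ‖⟪C ψ, C (T ψ)⟫_ℂ‖ := RCLike.re_le_norm _
      _ ≤ ‖C ψ‖ * ‖C (T ψ)‖ := norm_inner_le_norm _ _
      _ ≤ 1 * ‖T ψ‖ := by
          apply mul_le_mul _ (hCnorm _) (norm_nonneg _) zero_le_one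
          calc ‖C ψ‖ ≤ ‖ψ‖ := hCnorm ψ
          _ = 1 := hψ
      _ = ‖T ψ‖ := one_mul _
    nlinarith [norm_nonneg (T ψ)]
  -- T ψ = ψ
  have hTψ : T ψ = ψ := by
    have h0 : ‖T ψ - ψ‖ ^ 2 = ‖T ψ‖ ^ 2 - 2 * Complex.re ⟪T ψ, ψ⟫_ℂ + ‖ψ‖ ^ 2 :=
      @norm_sub_sq ℂ _ _ _ _ _ _
    rw [hTψψ, hψ] at h0
    have h1 : ‖T ψ - ψ‖ ^ 2 ≤ 0 := by
      rw [h0]; simp only [Complex.one_re]; nlinarith [hTnorm, norm_nonneg (T ψ)]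
    have h2 : ‖T ψ - ψ‖ = 0 := by nlinarith [norm_nonneg (T ψ - ψ)]
    rwa [norm_eq_zero, sub_eq_zero] at h2
  -- main computation
  have hmain : ⟪u ψ, ψ⟫_ℂ = (∑ j, e j * (α j : ℂ) ^ 2) * ⟪u ψ, ψ⟫_ℂ := by
    calc ⟪u ψ, ψ⟫_ℂ = ⟪u ψ, T ψ⟫_ℂ := by rw [hTψ]
    _ = ∑ j, ⟪u ψ, (adjoint (R j 0) ∘L (R j 0)) ψ⟫_ℂ := by
        rw [hT, ContinuousLinearMap.sum_apply, inner_sum]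
    _ = (∑ j, e j * (α j : ℂ) ^ 2) * ⟪u ψ, ψ⟫_ℂ := by
        rw [Finset.sum_mul]
        refine Finset.sum_congr rfl fun j _ => ?_
        rw [ContinuousLinearMap.comp_apply, adjoint_inner_right, hcomm j ψ, inner_smul_left,
          hconjc, hkey2 u hu_mem j]
        ring
  have hsum1 : ∑ j, e j * (α j : ℂ) ^ 2 = 1 := by
    have h : ((∑ j, e j * (α j : ℂ) ^ 2) - 1) * ⟪u ψ, ψ⟫_ℂ = 0 := by
      rw [sub_mul, one_mul, ← hmain, sub_self]
    rcases mul_eq_zero.mp h with h' | h'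
    · exact sub_eq_zero.mp h'
    · exact absurd h' hne
  -- each e j has modulus 1
  have habs : ∀ j, ‖e j‖ = 1 := by
    intro j
    rw [he, Complex.norm_exp]
    have : (2 * Complex.I * (t : ℂ) * (Real.log (α j) : ℂ)).re = 0 := by
      simp [Complex.mul_re, Complex.mul_im]
    rw [this, Real.exp_zero]
  -- real parts
  have hre : ∑ j, (α j) ^ 2 * (e j).re = 1 := by
    have h := congrArg Complex.re hsum1
    rw [Complex.re_sum] at h
    have hstep : ∑ j, (α j) ^ 2 * (e j).re = ∑ j, (e j * (α j : ℂ) ^ 2).re := by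
      refine Finset.sum_congr rfl fun j _ => ?_
      have hjc : e j * ((α j : ℂ)) ^ 2 = ((α j ^ 2 : ℝ) : ℂ) * e j := by push_cast; ring
      rw [hjc, Complex.re_ofReal_mul]
    rw [hstep, h, Complex.one_re]
  have hrele : ∀ j, (e j).re ≤ 1 := by
    intro j
    calc (e j).re ≤ ‖e j‖ := Complex.re_le_norm _
    _ = 1 := habs j
  have hre1 : ∀ j, (e j).re = 1 := by
    have hz : ∀ j ∈ Finset.univ, (0:ℝ) ≤ (α j) ^ 2 * (1 - (e j).re) := fun j _ =>
      mul_nonneg (sq_nonneg _) (by linarith [hrele j])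
    have hsz : ∑ j, (α j) ^ 2 * (1 - (e j).re) = 0 := by
      have heq : ∑ j, (α j) ^ 2 * (1 - (e j).re)
          = (∑ j, (α j) ^ 2) - ∑ j, (α j) ^ 2 * (e j).re := by
        rw [← Finset.sum_sub_distrib]
        exact Finset.sum_congr rfl fun j _ => by ring
      rw [heq, hsum, hre, sub_self]
    intro j
    have h0 := (Finset.sum_eq_zero_iff_of_nonneg hz).mp hsz j (Finset.mem_univ j)
    have hα2 : (0:ℝ) < (α j) ^ 2 := pow_pos (hα j) 2
    nlinarith
  intro j
  have him : (e j).im = 0 := by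
    have h2 : ‖e j‖ ^ 2 = 1 := by rw [habs j]; norm_num
    rw [Complex.sq_norm, Complex.normSq_apply, hre1 j, one_mul] at h2
    have h3 : (e j).im * (e j).im = 0 := by linarith
    exact mul_self_eq_zero.mp h3
  have hrej := hre1 j
  have hej : e j = Complex.exp (2 * Complex.I * (t : ℂ) * (Real.log (α j) : ℂ)) := by rw [he]
  rw [← hej]
  exact Complex.ext (by rw [hrej, Complex.one_re]) (by rw [him, Complex.one_im])
end
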